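/- arXiv:2305.01304 — 5 statements merged into one kernel-verified Lean document; each statement's English description precedes it below -/
import Mathlib

section
/- Let p be a prime number, let N ≥ 1, and let R be a finite commutative ring of characteristic p with exactly p^N elements. Let n, r ≥ 1 and let f_1, …, f_r ∈ R[t_1, …, t_n] be polynomials each of total degree at least 1. Let Z := {x ∈ R^n : f_1(x) = ⋯ = f_r(x) = 0}. Then p^β divides #Z, where β := max(0, ⌈ N·(n − Σ_{j=1}^r deg(f_j)) / max_{j=1}^r deg(f_j) ⌉). -/
set_option linter.unusedSectionVars false
set_option maxHeartbeats 1000000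
open Finset

namespace AxKatzAux



/-- digit sum in base `p` -/
def dsum (p n : ℕ) : ℕ := (Nat.digits p n).sum

lemma dsum_zero (p : ℕ) : dsum p 0 = 0 := by simp [dsum]

lemma ofDigits_eq_zero_of_sum_eq_zero {p : ℕ} {l : List ℕ} (h : l.sum = 0) :
    Nat.ofDigits p l = 0 := by
  induction l with
  | nil => simp
  | cons d L ih =>
    simp only [List.sum_cons, Nat.add_eq_zero] at h
    simp [Nat.ofDigits_cons, h.1, ih h.2]

lemma dsum_pos {p n : ℕ} (hn : n ≠ 0) : 0 < dsum p n := by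
  rcases Nat.eq_zero_or_pos (dsum p n) with h | h
  · exact absurd ((Nat.ofDigits_digits p n).symm.trans
      (ofDigits_eq_zero_of_sum_eq_zero h)) hn
  · exact h

lemma legendre {p : ℕ} (hp : p.Prime) (n : ℕ) :
    (p - 1) * padicValNat p (Nat.factorial n) = n - dsum p n := by
  haveI : Fact p.Prime := ⟨hp⟩
  exact sub_one_mul_padicValNat_factorial n

lemma dsum_le {p : ℕ} (n : ℕ) : dsum p n ≤ n := by
  have := Nat.digit_sum_le p n
  simpa [dsum] using this

lemma legendre' {p : ℕ} (hp : p.Prime) (n : ℕ) :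
    (p - 1) * padicValNat p (Nat.factorial n) + dsum p n = n := by
  rw [legendre hp]
  exact Nat.sub_add_cancel (dsum_le n)

lemma dsum_add_le {p : ℕ} (hp : p.Prime) (a b : ℕ) :
    dsum p (a + b) ≤ dsum p a + dsum p b := by
  haveI : Fact p.Prime := ⟨hp⟩
  have hdvd : Nat.factorial a * Nat.factorial b ∣ Nat.factorial (a + b) :=
    Nat.factorial_mul_factorial_dvd_factorial_add a b
  have h1 : padicValNat p (Nat.factorial a) + padicValNat p (Nat.factorial b) ≤
      padicValNat p (Nat.factorial (a + b)) := by
    rw [← padicValNat_dvd_iff_le (Nat.factorial_ne_zero (a+b))]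
    exact dvd_trans (by rw [pow_add]; exact mul_dvd_mul pow_padicValNat_dvd pow_padicValNat_dvd) hdvd
  have h2 := legendre' hp a
  have h3 := legendre' hp b
  have h4 := legendre' hp (a + b)
  have h5 : (p-1) * (padicValNat p (Nat.factorial a) + padicValNat p (Nat.factorial b)) ≤
      (p-1) * padicValNat p (Nat.factorial (a+b)) := Nat.mul_le_mul_left _ h1
  rw [Nat.mul_add] at h5
  omega

lemma dsum_mul_le {p : ℕ} (hp : p.Prime) (k : ℕ) : ∀ a : ℕ, dsum p (k * a) ≤ dsum p k * a := by
  intro a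
  induction a with
  | zero => simp [dsum_zero]
  | succ a ih =>
    have h := dsum_add_le hp (k * a) k
    calc dsum p (k * (a+1)) = dsum p (k * a + k) := by ring_nf
      _ ≤ dsum p (k*a) + dsum p k := h
      _ ≤ dsum p k * a + dsum p k := by omega
      _ = dsum p k * (a+1) := by ring

lemma dsum_sum_le {p : ℕ} (hp : p.Prime) {ι : Type*} (s : Finset ι) (f : ι → ℕ) :
    dsum p (∑ i ∈ s, f i) ≤ ∑ i ∈ s, dsum p (f i) := by
  classical
  induction s using Finset.induction with
  | empty => simp [dsum_zero]
  | insert _ _ hi ih =>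
    rename_i a s
    rw [Finset.sum_insert hi, Finset.sum_insert hi]
    exact (dsum_add_le hp _ _).trans (by omega)

lemma dsum_modeq {p : ℕ} (hp : p.Prime) (n : ℕ) : n ≡ dsum p n [MOD p - 1] := by
  rcases eq_or_lt_of_le hp.two_le with h | h
  · rw [← h]
    exact Nat.modEq_one
  · refine Nat.modEq_digits_sum (p-1) p ?_ n
    rw [Nat.mod_eq_sub_mod (by omega)]
    have h2 : p - (p - 1) = 1 := by omega
    rw [h2, Nat.mod_eq_of_lt (by omega)]

lemma le_dsum_of_dvd {p : ℕ} (hp : p.Prime) {n : ℕ} (hn : n ≠ 0) (h : (p - 1) ∣ n) :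
    p - 1 ≤ dsum p n := by
  have h0 : n ≡ 0 [MOD p - 1] := (Nat.modEq_zero_iff_dvd).2 h
  have h1 : (p-1) ∣ dsum p n := (Nat.modEq_zero_iff_dvd).1 ((dsum_modeq hp n).symm.trans h0)
  exact Nat.le_of_dvd (dsum_pos hn) h1

lemma dsum_pm_mul_pow {p : ℕ} (hp : p.Prime) (s : ℕ) : dsum p ((p - 1) * p ^ s) = p - 1 := by
  have hp2 := hp.two_le
  induction s with
  | zero =>
    rw [pow_zero, Nat.mul_one]
    unfold dsum
    rw [Nat.digits_def' hp.one_lt (by omega),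
      Nat.mod_eq_of_lt (by omega), Nat.div_eq_of_lt (by omega)]
    simp
  | succ s ih =>
    have h : (p-1) * p ^ (s+1) = ((p-1) * p ^ s) * p := by ring
    unfold dsum
    rw [h, Nat.digits_def' hp.one_lt
      (Nat.mul_pos (Nat.mul_pos (by omega) (pow_pos (by omega : 0 < p) s)) (by omega)),
      Nat.mul_mod_left, Nat.mul_div_cancel _ hp.pos]
    simpa [dsum] using ih


lemma padicValNat_prod {p : ℕ} (hp : p.Prime) {ι : Type*} (s : Finset ι) (f : ι → ℕ)
    (hf : ∀ i ∈ s, f i ≠ 0) :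
    padicValNat p (∏ i ∈ s, f i) = ∑ i ∈ s, padicValNat p (f i) := by
  classical
  haveI : Fact p.Prime := ⟨hp⟩
  induction s using Finset.induction with
  | empty => simp
  | insert _ _ hi ih =>
    rename_i a s
    rw [Finset.prod_insert hi, Finset.sum_insert hi,
      padicValNat.mul (hf a (Finset.mem_insert_self a s))
        (Finset.prod_ne_zero_iff.2 fun i hi' => hf i (Finset.mem_insert_of_mem hi')),
      ih (fun i hi' => hf i (Finset.mem_insert_of_mem hi'))]

lemma multinomial_val {p : ℕ} (hp : p.Prime) {β : ℕ} (hβ : 1 ≤ β) {Ω : Type*}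
    (s : Finset Ω) (k : Ω → ℕ) (hk : ∑ m ∈ s, k m = (p - 1) * p ^ (β - 1)) :
    (p - 1) * (padicValNat p (Nat.multinomial s k) + 1) = ∑ m ∈ s, dsum p (k m) := by
  classical
  haveI : Fact p.Prime := ⟨hp⟩
  set q := (p - 1) * p ^ (β - 1) with hq
  have hspec := Nat.multinomial_spec s k
  rw [hk] at hspec
  have hv : padicValNat p (∏ m ∈ s, Nat.factorial (k m)) + padicValNat p (Nat.multinomial s k)
      = padicValNat p (Nat.factorial q) := by
    rw [← padicValNat.mul (Finset.prod_ne_zero_iff.2 fun i _ => Nat.factorial_ne_zero _)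
      (Nat.multinomial_pos s k).ne', hspec]
  rw [padicValNat_prod hp s _ (fun i _ => Nat.factorial_ne_zero _)] at hv
  have hvs : (p-1) * (∑ m ∈ s, padicValNat p (Nat.factorial (k m)))
      + (p-1) * padicValNat p (Nat.multinomial s k) = (p-1) * padicValNat p (Nat.factorial q) := by
    rw [← Nat.mul_add, hv]
  have hB : (p-1) * (∑ m ∈ s, padicValNat p (Nat.factorial (k m)))
      + ∑ m ∈ s, dsum p (k m) = q := by
    rw [Finset.mul_sum, ← Finset.sum_add_distrib, ← hk]
    exact Finset.sum_congr rfl fun m _ => legendre' hp (k m)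
  have hq2 := legendre' hp q
  rw [dsum_pm_mul_pow hp (β - 1)] at hq2
  -- hq2 : (p-1) * v(q!) + (p-1) = q
  have := hp.two_le
  rw [Nat.mul_add, Nat.mul_one]
  omega




/-- Teichmüller-style lift `ZMod p → ZMod (p ^ β)`. -/
noncomputable def tei (p β : ℕ) (x : ZMod p) : ZMod (p ^ β) :=
  (x.val : ZMod (p ^ β)) ^ p ^ (β - 1)

/-- the reduction map -/
noncomputable def pr (p β : ℕ) (hβ : 1 ≤ β) : ZMod (p ^ β) →+* ZMod p :=
  ZMod.castHom (dvd_pow_self p (by omega : β ≠ 0)) (ZMod p)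

variable {p β : ℕ}

section
variable (hp : p.Prime) (hβ : 1 ≤ β)
include hp hβ

lemma pi_tei (x : ZMod p) : pr p β hβ (tei p β x) = x := by
  haveI : Fact p.Prime := ⟨hp⟩
  haveI : NeZero p := ⟨hp.ne_zero⟩
  rw [tei, map_pow, map_natCast, ZMod.natCast_zmod_val]
  induction (β - 1) with
  | zero => simp
  | succ s ih => rw [pow_succ, pow_mul, ih, ZMod.pow_card]

omit hβ in
lemma tei_zero : tei p β (0 : ZMod p) = 0 := by
  haveI : NeZero p := ⟨hp.ne_zero⟩
  rw [tei, ZMod.val_zero, Nat.cast_zero]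
  exact zero_pow (pow_ne_zero _ hp.ne_zero)

lemma tei_mul (x y : ZMod p) : tei p β (x * y) = tei p β x * tei p β y := by
  haveI : NeZero p := ⟨hp.ne_zero⟩
  have key : ∀ a b : ℕ, a ≡ b [MOD p] →
      ((a : ZMod (p ^ β)) ^ p ^ (β - 1) = (b : ZMod (p ^ β)) ^ p ^ (β - 1)) := by
    intro a b hab
    have h1 : (p : ℤ) ∣ (b : ℤ) - (a : ℤ) := hab.dvd
    have h2 := dvd_sub_pow_of_dvd_sub h1 (β - 1)
    rw [show β - 1 + 1 = β by omega] at h2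
    have h3 : (((b : ℤ) ^ p ^ (β-1) - (a : ℤ) ^ p ^ (β-1) : ℤ) : ZMod (p ^ β)) = 0 := by
      rw [ZMod.intCast_zmod_eq_zero_iff_dvd]
      exact_mod_cast h2
    push_cast at h3
    linear_combination -h3
  rw [tei, tei, tei, ← mul_pow, ← Nat.cast_mul]
  refine key _ _ ?_
  show (x * y).val % p = (x.val * y.val) % p
  rw [ZMod.val_mul, Nat.mod_mod_of_dvd _ dvd_rfl]

lemma isUnit_of_pr_ne {w : ZMod (p ^ β)} (h : pr p β hβ w ≠ 0) : IsUnit w := by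
  haveI : NeZero (p ^ β) := ⟨pow_ne_zero _ hp.ne_zero⟩
  have hw : w = ((w.val : ℕ) : ZMod (p ^ β)) := (ZMod.natCast_zmod_val w).symm
  rw [hw] at h ⊢
  rw [map_natCast] at h
  have hdvd : ¬ p ∣ w.val := fun hd => h ((ZMod.natCast_eq_zero_iff _ _).2 hd)
  exact (ZMod.isUnit_iff_coprime _ _).2
    (Nat.Coprime.pow_right _ (Nat.coprime_comm.1 (hp.coprime_iff_not_dvd.2 hdvd)))

lemma euler_pow {w : ZMod (p ^ β)} (h : IsUnit w) : w ^ ((p - 1) * p ^ (β - 1)) = 1 := by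
  haveI : Fact p.Prime := ⟨hp⟩
  have hφ : Nat.totient (p ^ β) = p ^ (β - 1) * (p - 1) :=
    Nat.totient_prime_pow hp (show 0 < β by omega)
  have hu := ZMod.pow_totient h.unit
  have h2 : (h.unit : ZMod (p ^ β)) ^ Nat.totient (p ^ β) = 1 := by
    rw [← Units.val_pow_eq_pow_val, hu, Units.val_one]
  rw [IsUnit.unit_spec] at h2
  rwa [mul_comm, ← hφ]

lemma isUnit_val_of_ne {x : ZMod p} (hx : x ≠ 0) : IsUnit ((x.val : ℕ) : ZMod (p ^ β)) := by
  haveI : NeZero p := ⟨hp.ne_zero⟩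
  refine (ZMod.isUnit_iff_coprime _ _).2 (Nat.Coprime.pow_right _ (Nat.coprime_comm.1
    (hp.coprime_iff_not_dvd.2 fun hd => hx ?_)))
  have h : (x.val : ZMod p) = 0 := (ZMod.natCast_eq_zero_iff _ _).2 hd
  rwa [ZMod.natCast_zmod_val] at h

lemma tei_pow_pm {x : ZMod p} (hx : x ≠ 0) : tei p β x ^ (p - 1) = 1 := by
  rw [tei, ← pow_mul, mul_comm]
  exact euler_pow hp hβ (isUnit_val_of_ne hp hβ hx)


variable [NeZero p]

lemma tsum_zero : ∑ y : ZMod p, tei p β y ^ 0 = ((p : ℕ) : ZMod (p ^ β)) := by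
  simp [Finset.card_univ, ZMod.card]

lemma tsum_of_dvd {a : ℕ} (ha : a ≠ 0) (hdvd : (p - 1) ∣ a) :
    ∑ y : ZMod p, tei p β y ^ a = ((p - 1 : ℕ) : ZMod (p ^ β)) := by
  haveI : Fact p.Prime := ⟨hp⟩
  obtain ⟨c, rfl⟩ := hdvd
  have h : ∀ y : ZMod p, tei p β y ^ ((p-1) * c) = if y = 0 then 0 else 1 := by
    intro y
    by_cases hy : y = 0
    · simp only [hy, if_pos rfl, tei_zero hp]
      exact zero_pow ha
    · rw [if_neg hy, pow_mul, tei_pow_pm hp hβ hy, one_pow]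
  rw [Finset.sum_congr rfl fun y _ => h y]
  have hcard : (Finset.univ.filter fun y : ZMod p => ¬ y = 0).card = p - 1 := by
    have h2 : (Finset.univ.filter fun y : ZMod p => ¬ y = 0) = Finset.univ.erase 0 := by
      ext y
      simp [Finset.mem_erase, and_comm]
    rw [h2, Finset.card_erase_of_mem (Finset.mem_univ _), Finset.card_univ, ZMod.card]
  rw [Finset.sum_ite, Finset.sum_const, Finset.sum_const, hcard]
  simp

lemma tsum_of_not_dvd {a : ℕ} (ha : a ≠ 0) (hdvd : ¬ (p - 1) ∣ a) :
    ∑ y : ZMod p, tei p β y ^ a = 0 := by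
  haveI : Fact p.Prime := ⟨hp⟩
  obtain ⟨g, hg⟩ := IsCyclic.exists_generator (α := (ZMod p)ˣ)
  set S := ∑ y : ZMod p, tei p β y ^ a with hS
  have hfac : tei p β (g : ZMod p) ^ a * S = S := by
    rw [hS, Finset.mul_sum]
    simp_rw [← mul_pow, ← tei_mul hp hβ]
    exact Fintype.sum_equiv (Equiv.mulLeft₀ (g : ZMod p) (Units.ne_zero g)) _ _ (fun y => rfl)
  have hunit : IsUnit (tei p β (g : ZMod p) ^ a - 1) := by
    apply isUnit_of_pr_ne hp hβ
    rw [map_sub, map_pow, pi_tei hp hβ, map_one, sub_ne_zero]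
    intro heq
    apply hdvd
    have hord : orderOf g = p - 1 := by
      rw [orderOf_eq_card_of_forall_mem_zpowers hg, Nat.card_eq_fintype_card, ZMod.card_units]
    have hgu : g ^ a = 1 :=
      Units.ext (by rw [Units.val_pow_eq_pow_val, Units.val_one]; exact heq)
    rw [← hord]
    exact orderOf_dvd_of_pow_eq_one hgu
  have hz : (tei p β (g : ZMod p) ^ a - 1) * S = 0 := by
    rw [sub_mul, one_mul, hfac, sub_self]
  exact (hunit.mul_right_eq_zero).1 hz

end

section Core

variable {p β : ℕ} {κ : Type*} [Fintype κ] [DecidableEq κ]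

/-- monomial value on Teichmüller lifts -/
noncomputable def Xm (p β : ℕ) (x : κ → ZMod p) (m : κ →₀ ℕ) : ZMod (p ^ β) :=
  ∏ v, tei p β (x v) ^ m v

/-- Teichmüller lift of a coefficient -/
noncomputable def wc (p β : ℕ) (g : MvPolynomial κ (ZMod p)) (m : κ →₀ ℕ) : ZMod (p ^ β) :=
  tei p β (MvPolynomial.coeff m g)

/-- lifted polynomial evaluation -/
noncomputable def FF (p β : ℕ) (S0 : Finset (κ →₀ ℕ)) (g : MvPolynomial κ (ZMod p))
    (x : κ → ZMod p) : ZMod (p ^ β) :=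
  ∑ m ∈ S0, wc p β g m * Xm p β x m

open Classical in
/-- expansion term -/
noncomputable def GG (p β : ℕ) (S0 : Finset (κ →₀ ℕ)) (g : MvPolynomial κ (ZMod p))
    (x : κ → ZMod p) (k : (κ →₀ ℕ) → ℕ) : ZMod (p ^ β) :=
  if k = (fun _ => 0) then 1
  else -((Nat.multinomial S0 k : ZMod (p ^ β)) * ∏ m ∈ S0, (wc p β g m * Xm p β x m) ^ k m)

section
variable (hp : p.Prime) (hβ : 1 ≤ β)
include hp hβ

lemma pr_FF (S0 : Finset (κ →₀ ℕ)) (g : MvPolynomial κ (ZMod p)) (hsub : g.support ⊆ S0)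
    (x : κ → ZMod p) : pr p β hβ (FF p β S0 g x) = MvPolynomial.eval x g := by
  haveI : Fact p.Prime := ⟨hp⟩
  rw [FF, map_sum, MvPolynomial.eval_eq']
  have hterm : ∀ m, pr p β hβ (wc p β g m * Xm p β x m)
      = MvPolynomial.coeff m g * ∏ v, x v ^ m v := by
    intro m
    rw [map_mul, wc, pi_tei hp hβ, Xm, map_prod]
    congr 1
    exact Finset.prod_congr rfl fun v _ => by rw [map_pow, pi_tei hp hβ]
  rw [Finset.sum_congr rfl fun m _ => hterm m]
  exact (Finset.sum_subset hsub (fun m _ hm => by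
    rw [MvPolynomial.notMem_support_iff.1 hm, zero_mul])).symm

lemma beta_le_q : β ≤ (p - 1) * p ^ (β - 1) := by
  have h2 : β - 1 < 2 ^ (β - 1) := Nat.lt_two_pow_self
  have h3 : 2 ^ (β - 1) ≤ p ^ (β - 1) := Nat.pow_le_pow_left hp.two_le _
  have h4 : p ^ (β - 1) ≤ (p - 1) * p ^ (β - 1) :=
    Nat.le_mul_of_pos_left _ (by have := hp.two_le; omega)
  omega

lemma FF_pow_q_eq_zero {S0 : Finset (κ →₀ ℕ)} {g : MvPolynomial κ (ZMod p)} (hsub : g.support ⊆ S0)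
    {x : κ → ZMod p} (h0 : MvPolynomial.eval x g = 0) :
    FF p β S0 g x ^ ((p - 1) * p ^ (β - 1)) = 0 := by
  haveI : NeZero (p ^ β) := ⟨pow_ne_zero _ hp.ne_zero⟩
  have hpr : pr p β hβ (FF p β S0 g x) = 0 := by rw [pr_FF hp hβ S0 g hsub x, h0]
  have hdvd : p ∣ (FF p β S0 g x).val := by
    refine (ZMod.natCast_eq_zero_iff _ p).1 ?_
    rw [← map_natCast (pr p β hβ), ZMod.natCast_zmod_val]
    exact hpr
  obtain ⟨c, hc⟩ := hdvd
  have hww : FF p β S0 g x = (p : ZMod (p ^ β)) * (c : ZMod (p ^ β)) := by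
    rw [← ZMod.natCast_zmod_val (FF p β S0 g x), hc]; push_cast; ring
  rw [hww, mul_pow, ← Nat.cast_pow]
  have hz : ((p ^ ((p-1) * p ^ (β-1)) : ℕ) : ZMod (p ^ β)) = 0 := by
    rw [ZMod.natCast_eq_zero_iff]
    exact pow_dvd_pow p (beta_le_q hp hβ)
  rw [hz, zero_mul]

lemma FF_pow_q_eq_one {S0 : Finset (κ →₀ ℕ)} {g : MvPolynomial κ (ZMod p)} (hsub : g.support ⊆ S0)
    {x : κ → ZMod p} (h0 : MvPolynomial.eval x g ≠ 0) :
    FF p β S0 g x ^ ((p - 1) * p ^ (β - 1)) = 1 :=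
  euler_pow hp hβ (isUnit_of_pr_ne hp hβ (by rw [pr_FF hp hβ S0 g hsub x]; exact h0))

end
end Core

section Term

variable {p β : ℕ} {κ : Type*} [Fintype κ] [DecidableEq κ]

lemma term_vanish [NeZero p] (hp : p.Prime) (hβ : 1 ≤ β) {ι : Type*} [Fintype ι]
    (g : ι → MvPolynomial κ (ZMod p)) (e : ι → ℕ) (D : ℕ) (hD : 1 ≤ D)
    (hdeg : ∀ j, (g j).totalDegree ≤ e j) (heD : ∀ j, e j ≤ D)
    (hM : (β - 1) * D + ∑ j, e j < Fintype.card κ)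
    (S0 : Finset (κ →₀ ℕ))
    (K : ι → ((κ →₀ ℕ) → ℕ))
    (hK : ∀ j, K j = (fun _ => 0) ∨ K j ∈ Finset.piAntidiag S0 ((p-1) * p^(β-1))) :
    ∑ x : κ → ZMod p, ∏ j, GG p β S0 (g j) x (K j) = 0 := by
  classical
  haveI : Fact p.Prime := ⟨hp⟩
  haveI : NeZero p := ⟨hp.ne_zero⟩
  haveI : NeZero (p ^ β) := ⟨pow_ne_zero _ hp.ne_zero⟩
  have hPpos : 0 < p - 1 := by have := hp.two_le; omega
  set q := (p - 1) * p ^ (β - 1) with hqdef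
  set t : Finset ι := univ.filter (fun j => K j ≠ (fun _ => 0)) with ht
  have hKt : ∀ j ∈ t, K j ∈ Finset.piAntidiag S0 q :=
    fun j hj => (hK j).resolve_left (Finset.mem_filter.1 hj).2
  have hKq : ∀ j ∈ t, ∑ m ∈ S0, K j m = q :=
    fun j hj => (Finset.mem_piAntidiag.1 (hKt j hj)).1
  set A' : κ → ℕ := fun v => ∑ j ∈ t, ∑ m ∈ S0, m v * K j m with hA'
  -- rearrangement of the product
  have hGt : ∀ x : κ → ZMod p, ∏ j, GG p β S0 (g j) x (K j)
      = ((-1 : ZMod (p ^ β)) ^ t.card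
          * ((∏ j ∈ t, Nat.multinomial S0 (K j) : ℕ) : ZMod (p ^ β))
          * ∏ j ∈ t, ∏ m ∈ S0, wc p β (g j) m ^ K j m)
        * ∏ v, tei p β (x v) ^ A' v := by
    intro x
    have hsplit : ∏ j, GG p β S0 (g j) x (K j) = ∏ j ∈ t, GG p β S0 (g j) x (K j) := by
      rw [← Finset.prod_filter_mul_prod_filter_not univ (fun j => K j ≠ (fun _ => 0))
        (fun j => GG p β S0 (g j) x (K j)), ← ht]
      have h1 : ∏ j ∈ univ.filter (fun j => ¬ K j ≠ (fun _ => 0)), GG p β S0 (g j) x (K j) = 1 :=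
        Finset.prod_eq_one fun j hj => by
          rw [GG, if_pos (not_not.1 (Finset.mem_filter.1 hj).2)]
      rw [h1, mul_one]
    rw [hsplit]
    have hjval : ∀ j ∈ t, GG p β S0 (g j) x (K j)
        = (-1) * (((Nat.multinomial S0 (K j) : ℕ) : ZMod (p ^ β))
          * ((∏ m ∈ S0, wc p β (g j) m ^ K j m)
            * ∏ m ∈ S0, ∏ v, tei p β (x v) ^ (m v * K j m))) := by
      intro j hj
      rw [GG, if_neg (Finset.mem_filter.1 hj).2]
      have h2 : ∏ m ∈ S0, (wc p β (g j) m * Xm p β x m) ^ K j m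
          = (∏ m ∈ S0, wc p β (g j) m ^ K j m)
            * ∏ m ∈ S0, ∏ v, tei p β (x v) ^ (m v * K j m) := by
        rw [← Finset.prod_mul_distrib]
        refine Finset.prod_congr rfl fun m _ => ?_
        rw [mul_pow, Xm, ← Finset.prod_pow]
        congr 1
        exact Finset.prod_congr rfl fun v _ => (pow_mul _ _ _).symm
      rw [h2]
      ring
    rw [Finset.prod_congr rfl hjval, Finset.prod_mul_distrib, Finset.prod_mul_distrib,
      Finset.prod_mul_distrib, Finset.prod_const]
    have hA : ∏ j ∈ t, ∏ m ∈ S0, ∏ v, tei p β (x v) ^ (m v * K j m)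
        = ∏ v, tei p β (x v) ^ A' v := by
      have h1 : ∀ j, ∏ m ∈ S0, ∏ v, tei p β (x v) ^ (m v * K j m)
          = ∏ v, tei p β (x v) ^ (∑ m ∈ S0, m v * K j m) := by
        intro j
        rw [Finset.prod_comm]
        exact Finset.prod_congr rfl fun v _ => Finset.prod_pow_eq_pow_sum _ _ _
      rw [Finset.prod_congr rfl fun j _ => h1 j, Finset.prod_comm]
      exact Finset.prod_congr rfl fun v _ => Finset.prod_pow_eq_pow_sum _ _ _
    rw [hA, Nat.cast_prod]
    ring
  rw [Finset.sum_congr rfl fun x _ => hGt x, ← Finset.mul_sum]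
  have hxsum : ∑ x : κ → ZMod p, ∏ v, tei p β (x v) ^ A' v
      = ∏ v, ∑ y : ZMod p, tei p β y ^ A' v := by
    rw [← Fintype.piFinset_univ]
    exact (Finset.prod_univ_sum (fun _ : κ => (univ : Finset (ZMod p)))
      (fun v y => tei p β y ^ A' v)).symm
  rw [hxsum]
  by_cases hsupp : ∀ j ∈ t, ∀ m, K j m ≠ 0 → m ∈ (g j).support
  swap
  · -- some needed coefficient is 0
    push_neg at hsupp
    obtain ⟨j0, hj0t, m0, hk0, hm0⟩ := hsupp
    have hm0S : m0 ∈ S0 := (Finset.mem_piAntidiag.1 (hKt j0 hj0t)).2 m0 hk0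
    have hz : ∏ j ∈ t, ∏ m ∈ S0, wc p β (g j) m ^ K j m = 0 := by
      refine Finset.prod_eq_zero hj0t (Finset.prod_eq_zero hm0S ?_)
      rw [wc, MvPolynomial.notMem_support_iff.1 hm0, tei_zero hp, zero_pow hk0]
    rw [hz]
    ring
  by_cases hbad : ∀ v, A' v ≠ 0 → (p - 1) ∣ A' v
  swap
  · push_neg at hbad
    obtain ⟨v0, hv0, hv0d⟩ := hbad
    rw [Finset.prod_eq_zero (Finset.mem_univ v0) (tsum_of_not_dvd hp hβ hv0 hv0d)]
    ring
  -- main case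
  set z := (univ.filter fun v : κ => A' v = 0).card with hzdef
  set Mz := (univ.filter fun v : κ => ¬ A' v = 0).card with hMzdef
  have hprodsum : ∏ v, (∑ y : ZMod p, tei p β y ^ A' v)
      = ((p ^ z * (p-1) ^ Mz : ℕ) : ZMod (p ^ β)) := by
    rw [← Finset.prod_filter_mul_prod_filter_not univ (fun v => A' v = 0)]
    have h1 : ∏ v ∈ univ.filter (fun v : κ => A' v = 0), (∑ y : ZMod p, tei p β y ^ A' v)
        = ((p : ℕ) : ZMod (p ^ β)) ^ z := by
      rw [← Finset.prod_const]
      refine Finset.prod_congr rfl fun v hv => ?_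
      rw [(Finset.mem_filter.1 hv).2]
      exact tsum_zero hp hβ
    have h2 : ∏ v ∈ univ.filter (fun v : κ => ¬ A' v = 0), (∑ y : ZMod p, tei p β y ^ A' v)
        = (((p - 1) : ℕ) : ZMod (p ^ β)) ^ Mz := by
      rw [← Finset.prod_const]
      refine Finset.prod_congr rfl fun v hv => ?_
      exact tsum_of_dvd hp hβ (Finset.mem_filter.1 hv).2 (hbad v (Finset.mem_filter.1 hv).2)
    rw [h1, h2]
    push_cast
    ring
  rw [hprodsum]
  set V := ∑ j ∈ t, padicValNat p (Nat.multinomial S0 (K j)) with hVdef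
  -- the key combinatorial inequality
  have hineq : β ≤ V + z := by
    by_cases hVβ : β ≤ V
    · omega
    have hsig : ∀ j ∈ t, (p-1) * (padicValNat p (Nat.multinomial S0 (K j)) + 1)
        = ∑ m ∈ S0, dsum p (K j m) :=
      fun j hj => multinomial_val hp hβ S0 (K j) (hKq j hj)
    have h1 : (p-1) * Mz ≤ ∑ v ∈ univ.filter (fun v : κ => ¬ A' v = 0), dsum p (A' v) := by
      have hle : ∀ v ∈ univ.filter (fun v : κ => ¬ A' v = 0), p - 1 ≤ dsum p (A' v) :=
        fun v hv => le_dsum_of_dvd hp (Finset.mem_filter.1 hv).2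
          (hbad v (Finset.mem_filter.1 hv).2)
      calc (p-1) * Mz = ∑ _v ∈ univ.filter (fun v : κ => ¬ A' v = 0), (p-1) := by
            rw [Finset.sum_const, smul_eq_mul, Nat.mul_comm]
        _ ≤ _ := Finset.sum_le_sum hle
    have h2 : ∑ v ∈ univ.filter (fun v : κ => ¬ A' v = 0), dsum p (A' v)
        ≤ ∑ v : κ, dsum p (A' v) :=
      Finset.sum_le_sum_of_subset (Finset.filter_subset _ _)
    have h3 : ∑ v : κ, dsum p (A' v) ≤ ∑ j ∈ t, ∑ m ∈ S0, dsum p (K j m) * e j := by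
      calc ∑ v : κ, dsum p (A' v)
          ≤ ∑ v : κ, ∑ j ∈ t, ∑ m ∈ S0, dsum p (K j m) * m v := by
            refine Finset.sum_le_sum fun v _ => ?_
            calc dsum p (A' v) ≤ ∑ j ∈ t, dsum p (∑ m ∈ S0, m v * K j m) :=
                  dsum_sum_le hp t _
              _ ≤ ∑ j ∈ t, ∑ m ∈ S0, dsum p (m v * K j m) :=
                  Finset.sum_le_sum fun j _ => dsum_sum_le hp S0 _
              _ ≤ ∑ j ∈ t, ∑ m ∈ S0, dsum p (K j m) * m v := by
                  refine Finset.sum_le_sum fun j _ => Finset.sum_le_sum fun m _ => ?_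
                  rw [Nat.mul_comm (m v)]
                  exact dsum_mul_le hp _ _
        _ = ∑ j ∈ t, ∑ m ∈ S0, dsum p (K j m) * (∑ v, m v) := by
            rw [Finset.sum_comm]
            refine Finset.sum_congr rfl fun j _ => ?_
            rw [Finset.sum_comm]
            exact Finset.sum_congr rfl fun m _ => by rw [← Finset.mul_sum]
        _ ≤ ∑ j ∈ t, ∑ m ∈ S0, dsum p (K j m) * e j := by
            refine Finset.sum_le_sum fun j hj => Finset.sum_le_sum fun m _ => ?_
            by_cases hk0 : K j m = 0
            · simp [hk0, dsum_zero]
            · refine Nat.mul_le_mul_left _ ?_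
              have hmem := hsupp j hj m hk0
              have hsum2 : ∑ v, m v = ∑ v ∈ m.support, m v :=
                (Finset.sum_subset (Finset.subset_univ _)
                  (fun v _ hv => Finsupp.notMem_support_iff.1 hv)).symm
              rw [hsum2]
              exact le_trans (MvPolynomial.le_totalDegree hmem) (hdeg j)
    have h4 : ∑ j ∈ t, ∑ m ∈ S0, dsum p (K j m) * e j
        = (p-1) * ∑ j ∈ t, (padicValNat p (Nat.multinomial S0 (K j)) + 1) * e j := by
      rw [Finset.mul_sum]
      refine Finset.sum_congr rfl fun j hj => ?_
      rw [← Finset.sum_mul, ← hsig j hj, Nat.mul_assoc]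
    have h5 : Mz ≤ ∑ j ∈ t, (padicValNat p (Nat.multinomial S0 (K j)) + 1) * e j :=
      Nat.le_of_mul_le_mul_left (h1.trans (h2.trans (h3.trans_eq h4))) hPpos
    have h6 : ∑ j ∈ t, (padicValNat p (Nat.multinomial S0 (K j)) + 1) * e j
        ≤ ∑ j ∈ t, e j + D * V := by
      calc ∑ j ∈ t, (padicValNat p (Nat.multinomial S0 (K j)) + 1) * e j
          = ∑ j ∈ t, (e j + padicValNat p (Nat.multinomial S0 (K j)) * e j) := by
            refine Finset.sum_congr rfl fun j _ => ?_
            rw [Nat.succ_mul, Nat.add_comm]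
        _ = ∑ j ∈ t, e j + ∑ j ∈ t, padicValNat p (Nat.multinomial S0 (K j)) * e j :=
            Finset.sum_add_distrib
        _ ≤ ∑ j ∈ t, e j + ∑ j ∈ t, padicValNat p (Nat.multinomial S0 (K j)) * D :=
            Nat.add_le_add_left (Finset.sum_le_sum fun j _ =>
              Nat.mul_le_mul_left _ (heD j)) _
        _ = ∑ j ∈ t, e j + D * V := by rw [← Finset.sum_mul, hVdef, Nat.mul_comm]
    have h7 : ∑ j ∈ t, e j ≤ ∑ j, e j := Finset.sum_le_sum_of_subset (Finset.subset_univ t)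
    have h8 : z + Mz = Fintype.card κ := by
      rw [hzdef, hMzdef, Finset.card_filter_add_card_filter_not, Finset.card_univ]
    have h9 : (β-1) * D = D * V + D * ((β-1) - V) := by
      rw [Nat.mul_comm, ← Nat.left_distrib]
      congr 1
      omega
    have h10 : (β-1) - V ≤ D * ((β-1) - V) := Nat.le_mul_of_pos_left _ (by omega)
    omega
  -- conclude divisibility
  have hdvd1 : p ^ V ∣ ∏ j ∈ t, Nat.multinomial S0 (K j) := by
    rw [hVdef, ← Finset.prod_pow_eq_pow_sum]
    exact Finset.prod_dvd_prod_of_dvd _ _ fun j _ => pow_padicValNat_dvd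
  have hdvd : p ^ β ∣ (∏ j ∈ t, Nat.multinomial S0 (K j)) * (p ^ z * (p-1) ^ Mz) := by
    calc p ^ β ∣ p ^ (V + z) := pow_dvd_pow p hineq
      _ = p ^ V * p ^ z := pow_add p V z
      _ ∣ (∏ j ∈ t, Nat.multinomial S0 (K j)) * p ^ z := mul_dvd_mul_right hdvd1 _
      _ ∣ _ := ⟨(p-1) ^ Mz, by ring⟩
  have hc : (((∏ j ∈ t, Nat.multinomial S0 (K j)) * (p ^ z * (p-1) ^ Mz) : ℕ)
      : ZMod (p ^ β)) = 0 := (ZMod.natCast_eq_zero_iff _ _).2 hdvd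
  calc ((-1 : ZMod (p ^ β)) ^ t.card
          * ((∏ j ∈ t, Nat.multinomial S0 (K j) : ℕ) : ZMod (p ^ β))
          * ∏ j ∈ t, ∏ m ∈ S0, wc p β (g j) m ^ K j m)
        * ((p ^ z * (p-1) ^ Mz : ℕ) : ZMod (p ^ β))
      = ((-1 : ZMod (p ^ β)) ^ t.card * ∏ j ∈ t, ∏ m ∈ S0, wc p β (g j) m ^ K j m)
        * (((∏ j ∈ t, Nat.multinomial S0 (K j)) * (p ^ z * (p-1) ^ Mz) : ℕ)
          : ZMod (p ^ β)) := by push_cast; ring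
    _ = 0 := by rw [hc, mul_zero]

end Term

/-- **Ax–Katz over the prime field** (with degree bounds). -/
theorem katz_zmod (p : ℕ) (hp : p.Prime) (β : ℕ) (hβ : 1 ≤ β)
    {ι κ : Type*} [Fintype ι] [Fintype κ] [DecidableEq κ]
    (g : ι → MvPolynomial κ (ZMod p)) (e : ι → ℕ) (D : ℕ) (hD : 1 ≤ D)
    (hdeg : ∀ j, (g j).totalDegree ≤ e j) (heD : ∀ j, e j ≤ D)
    (hM : (β - 1) * D + ∑ j, e j < Fintype.card κ) :
    p ^ β ∣ Nat.card {x : κ → ZMod p // ∀ j, MvPolynomial.eval x (g j) = 0} := by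
  classical
  haveI : Fact p.Prime := ⟨hp⟩
  haveI : NeZero p := ⟨hp.ne_zero⟩
  haveI : NeZero (p ^ β) := ⟨pow_ne_zero _ hp.ne_zero⟩
  set q := (p - 1) * p ^ (β - 1) with hqdef
  have hq0 : q ≠ 0 := by
    have h2 := hp.two_le
    have h3 : p ^ (β - 1) ≠ 0 := pow_ne_zero _ hp.ne_zero
    exact Nat.mul_ne_zero (by omega) h3
  set S0 : Finset (κ →₀ ℕ) := Finset.univ.biUnion (fun j => (g j).support) with hS0
  have hsub : ∀ j, (g j).support ⊆ S0 := fun j => by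
    rw [hS0]
    exact Finset.subset_biUnion_of_mem (fun j => (g j).support) (Finset.mem_univ j)
  suffices hvan : ((Nat.card {x : κ → ZMod p // ∀ j, MvPolynomial.eval x (g j) = 0} : ℕ)
      : ZMod (p ^ β)) = 0 by
    rwa [ZMod.natCast_eq_zero_iff] at hvan
  have hcount : ((Nat.card {x : κ → ZMod p // ∀ j, MvPolynomial.eval x (g j) = 0} : ℕ)
      : ZMod (p ^ β)) = ∑ x : κ → ZMod p, ∏ j, (1 - FF p β S0 (g j) x ^ q) := by
    have hind : ∀ x : κ → ZMod p, (∏ j, (1 - FF p β S0 (g j) x ^ q))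
        = if (∀ j, MvPolynomial.eval x (g j) = 0) then 1 else 0 := by
      intro x
      by_cases hx : ∀ j, MvPolynomial.eval x (g j) = 0
      · rw [if_pos hx]
        refine Finset.prod_eq_one fun j _ => ?_
        rw [FF_pow_q_eq_zero hp hβ (hsub j) (hx j), sub_zero]
      · rw [if_neg hx]
        push_neg at hx
        obtain ⟨j0, hj0⟩ := hx
        refine Finset.prod_eq_zero (Finset.mem_univ j0) ?_
        rw [FF_pow_q_eq_one hp hβ (hsub j0) hj0, sub_self]
    rw [Finset.sum_congr rfl fun x _ => hind x, Finset.sum_boole,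
      Nat.card_eq_fintype_card, Fintype.card_subtype]
  rw [hcount]
  -- expansion of each factor
  have hexp : ∀ (x : κ → ZMod p) (j : ι), (1 - FF p β S0 (g j) x ^ q : ZMod (p ^ β))
      = ∑ k ∈ insert (fun _ => 0) (Finset.piAntidiag S0 q), GG p β S0 (g j) x k := by
    intro x j
    have hnm : (fun _ => (0:ℕ)) ∉ Finset.piAntidiag S0 q := by
      intro hmem
      have := (Finset.mem_piAntidiag.1 hmem).1
      simp only [Finset.sum_const_zero] at this
      exact hq0 this.symm
    rw [Finset.sum_insert hnm, GG, if_pos rfl]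
    have hcong : ∀ k ∈ Finset.piAntidiag S0 q, GG p β S0 (g j) x k
        = -((Nat.multinomial S0 k : ZMod (p ^ β))
          * ∏ m ∈ S0, (wc p β (g j) m * Xm p β x m) ^ k m) := by
      intro k hk
      rw [GG, if_neg]
      rintro rfl
      exact hnm hk
    rw [Finset.sum_congr rfl hcong, Finset.sum_neg_distrib,
      ← Finset.sum_pow_eq_sum_piAntidiag, FF]
    ring
  rw [Finset.sum_congr rfl fun x _ =>
    Finset.prod_congr rfl fun j _ => hexp x j]
  rw [Finset.sum_congr rfl fun x _ =>
    Finset.prod_univ_sum (fun _ : ι => insert (fun _ => 0) (Finset.piAntidiag S0 q))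
      (fun j k => GG p β S0 (g j) x k)]
  rw [Finset.sum_comm]
  refine Finset.sum_eq_zero fun K hK => ?_
  refine term_vanish hp hβ g e D hD hdeg heD hM S0 K fun j => ?_
  have := Fintype.mem_piFinset.1 hK j
  rcases Finset.mem_insert.1 this with h | h
  · exact Or.inl h
  · exact Or.inr h

section Reduction

lemma aeval_eq_eval' {R' : Type*} [CommSemiring R'] {σ : Type*} (f : σ → R')
    (q : MvPolynomial σ R') : MvPolynomial.aeval f q = MvPolynomial.eval f q := by
  rw [← MvPolynomial.coe_aeval_eq_eval]
  rfl

lemma eval_bind1 {R' : Type*} [CommSemiring R'] {σ τ : Type*} (z : τ → R')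
    (s : σ → MvPolynomial τ R') (φ : MvPolynomial σ R') :
    MvPolynomial.eval z (MvPolynomial.bind₁ s φ)
      = MvPolynomial.eval (fun i => MvPolynomial.eval z (s i)) φ := by
  rw [← aeval_eq_eval', MvPolynomial.aeval_bind₁, ← aeval_eq_eval']
  exact congrArg (fun w => MvPolynomial.aeval (R := R') w φ)
    (funext fun i => aeval_eq_eval' z (s i))

lemma totalDegree_bind1_le {R' : Type*} [CommSemiring R'] {σ τ : Type*}
    (s : σ → MvPolynomial τ R') (hs : ∀ i, (s i).totalDegree ≤ 1) (φ : MvPolynomial σ R') :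
    (MvPolynomial.bind₁ s φ).totalDegree ≤ φ.totalDegree := by
  classical
  conv_lhs => rw [MvPolynomial.as_sum φ]
  rw [map_sum]
  refine le_trans (MvPolynomial.totalDegree_finset_sum _ _) (Finset.sup_le fun m hm => ?_)
  rw [MvPolynomial.bind₁_monomial]
  refine le_trans (MvPolynomial.totalDegree_mul _ _) ?_
  rw [MvPolynomial.totalDegree_C, Nat.zero_add]
  refine le_trans (MvPolynomial.totalDegree_finset_prod _ _) ?_
  refine le_trans (Finset.sum_le_sum fun i (_ : i ∈ m.support) =>
    le_trans (MvPolynomial.totalDegree_pow _ _)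
      (Nat.mul_le_mul_left (m i) (hs i))) ?_
  simp only [Nat.mul_one]
  exact MvPolynomial.le_totalDegree hm

end Reduction

/-- **Ring-Theoretic Prime Ax-Katz Theorem.** -/
theorem ring_theoretic_prime_ax_katz'
    (p : ℕ) (hp : p.Prime) (N : ℕ) (hN : 1 ≤ N)
    (R : Type*) [CommRing R] [Fintype R] [CharP R p]
    (hcard : Fintype.card R = p ^ N)
    (n r : ℕ) (hn : 1 ≤ n) (hr : 1 ≤ r)
    (f : Fin r → MvPolynomial (Fin n) R)
    (hdeg : ∀ j, 1 ≤ (f j).totalDegree) :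
    p ^ (⌈((N : ℚ) * ((n : ℚ) - ∑ j, ((f j).totalDegree : ℚ))) /
          (((Finset.univ.sup fun j => (f j).totalDegree) : ℕ) : ℚ)⌉.toNat) ∣
      Nat.card {x : Fin n → R // ∀ j, MvPolynomial.eval x (f j) = 0} := by
  classical
  haveI : Fact p.Prime := ⟨hp⟩
  set D : ℕ := Finset.univ.sup fun j => (f j).totalDegree with hDdef
  set β : ℕ := (⌈((N : ℚ) * ((n : ℚ) - ∑ j, ((f j).totalDegree : ℚ))) /
      ((D : ℕ) : ℚ)⌉).toNat with hb
  by_cases hβ0 : β = 0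
  · rw [hβ0, pow_zero]
    exact one_dvd _
  have hβ : 1 ≤ β := by omega
  have j0 : Fin r := ⟨0, hr⟩
  have hD1 : 1 ≤ D := by
    rw [hDdef]
    exact le_trans (hdeg j0)
      (Finset.le_sup (f := fun j => (f j).totalDegree) (Finset.mem_univ j0))
  -- set up the algebra structure
  haveI : Nontrivial R := by
    refine Fintype.one_lt_card_iff_nontrivial.1 ?_
    rw [hcard]
    have h2 := hp.two_le
    calc 1 < p := by omega
      _ ≤ p ^ N := Nat.le_self_pow (by omega) p
  letI : Algebra (ZMod p) R := ZMod.algebra R p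
  haveI : Module.Finite (ZMod p) R := Module.Finite.of_finite
  have hrank : Module.finrank (ZMod p) R = N := by
    have hc := Module.card_eq_pow_finrank (K := ZMod p) (V := R)
    rw [ZMod.card, hcard] at hc
    exact (Nat.pow_right_injective hp.two_le hc.symm)
  let b : Module.Basis (Fin N) (ZMod p) R := Module.finBasisOfFinrankEq (ZMod p) R hrank
  -- substituted polynomials
  let sub : Fin n → MvPolynomial (Fin n × Fin N) R :=
    fun i => ∑ k, MvPolynomial.C (b k) * MvPolynomial.X (i, k)
  have hsubdeg : ∀ i, (sub i).totalDegree ≤ 1 := by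
    intro i
    refine le_trans (MvPolynomial.totalDegree_finset_sum _ _) (Finset.sup_le fun k _ => ?_)
    refine le_trans (MvPolynomial.totalDegree_mul _ _) ?_
    rw [MvPolynomial.totalDegree_C, MvPolynomial.totalDegree_X, Nat.zero_add]
  let h : Fin r → MvPolynomial (Fin n × Fin N) R := fun j => MvPolynomial.bind₁ sub (f j)
  have hdegh : ∀ j, (h j).totalDegree ≤ (f j).totalDegree :=
    fun j => totalDegree_bind1_le sub hsubdeg (f j)
  -- the coordinate polynomials over ZMod p
  let g : (Fin r × Fin N) → MvPolynomial (Fin n × Fin N) (ZMod p) := fun jk =>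
    ∑ m ∈ (h jk.1).support,
      MvPolynomial.monomial m (b.repr (MvPolynomial.coeff m (h jk.1)) jk.2)
  have hdegg : ∀ jk : Fin r × Fin N, (g jk).totalDegree ≤ (f jk.1).totalDegree := by
    intro jk
    refine le_trans (MvPolynomial.totalDegree_finset_sum _ _)
      (le_trans (Finset.sup_le fun m hm => ?_) (hdegh jk.1))
    exact le_trans (MvPolynomial.totalDegree_monomial_le _ _) (MvPolynomial.le_totalDegree hm)
  -- evaluation compatibility
  have hzR : ∀ (y : Fin n × Fin N → ZMod p) (j : Fin r),
      MvPolynomial.eval (fun i => ∑ k, y (i,k) • b k) (f j)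
        = MvPolynomial.eval (fun v => algebraMap (ZMod p) R (y v)) (h j) := by
    intro y j
    rw [eval_bind1]
    have heq : (fun i => ∑ k, y (i,k) • b k)
        = (fun i => MvPolynomial.eval (fun v => algebraMap (ZMod p) R (y v)) (sub i)) := by
      funext i
      rw [map_sum]
      refine Finset.sum_congr rfl fun k _ => ?_
      rw [map_mul, MvPolynomial.eval_C, MvPolynomial.eval_X, Algebra.smul_def]
      ring
    rw [heq]
  have hcoord : ∀ (y : Fin n × Fin N → ZMod p) (j : Fin r) (k : Fin N),
      b.repr (MvPolynomial.eval (fun v => algebraMap (ZMod p) R (y v)) (h j)) k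
        = MvPolynomial.eval y (g (j, k)) := by
    intro y j k
    rw [MvPolynomial.eval_eq (fun v => algebraMap (ZMod p) R (y v)) (h j)]
    have h1 : ∀ m : (Fin n × Fin N) →₀ ℕ,
        (MvPolynomial.coeff m (h j)) * ∏ v ∈ m.support, (algebraMap (ZMod p) R (y v)) ^ m v
        = (∏ v ∈ m.support, y v ^ m v) • (MvPolynomial.coeff m (h j)) := by
      intro m
      have h2 : ∏ v ∈ m.support, (algebraMap (ZMod p) R (y v)) ^ m v
          = algebraMap (ZMod p) R (∏ v ∈ m.support, y v ^ m v) := by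
        rw [map_prod]
        exact Finset.prod_congr rfl fun v _ => (map_pow _ _ _).symm
      rw [h2, Algebra.smul_def, mul_comm]
    rw [Finset.sum_congr rfl fun m _ => h1 m, map_sum, Finsupp.finset_sum_apply]
    have h3 : ∀ m : (Fin n × Fin N) →₀ ℕ,
        (b.repr ((∏ v ∈ m.support, y v ^ m v) • MvPolynomial.coeff m (h j))) k
          = (∏ v ∈ m.support, y v ^ m v) * (b.repr (MvPolynomial.coeff m (h j))) k := by
      intro m
      rw [map_smul, Finsupp.smul_apply, smul_eq_mul]
    rw [Finset.sum_congr rfl fun m _ => h3 m]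
    rw [map_sum]
    refine Finset.sum_congr rfl fun m _ => ?_
    rw [MvPolynomial.eval_monomial]
    rw [mul_comm]
    congr 1
  -- the equivalence of solution sets
  let E : (Fin n → R) ≃ (Fin n × Fin N → ZMod p) :=
  { toFun := fun x v => b.repr (x v.1) v.2
    invFun := fun y i => ∑ k, y (i,k) • b k
    left_inv := fun x => funext fun i => b.sum_repr (x i)
    right_inv := fun y => funext fun v => by
      show (b.repr (∑ k, y (v.1, k) • b k)) v.2 = y v
      rw [map_sum, Finsupp.finset_sum_apply]
      have h4 : ∀ k, (b.repr (y (v.1, k) • b k)) v.2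
          = if k = v.2 then y (v.1, k) else 0 := by
        intro k
        rw [map_smul, Finsupp.smul_apply, smul_eq_mul, Module.Basis.repr_self_apply]
        split <;> simp
      rw [Finset.sum_congr rfl fun k _ => h4 k, Finset.sum_ite_eq' Finset.univ v.2]
      simp }
  have hEx : ∀ (x : Fin n → R) (i : Fin n), x i = ∑ k, (E x) (i,k) • b k :=
    fun x i => (b.sum_repr (x i)).symm
  have hcond : ∀ x : Fin n → R,
      (∀ j, MvPolynomial.eval x (f j) = 0)
        ↔ (∀ jk : Fin r × Fin N, MvPolynomial.eval (E x) (g jk) = 0) := by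
    intro x
    have hkey : ∀ (j : Fin r) (k : Fin N),
        b.repr (MvPolynomial.eval x (f j)) k = MvPolynomial.eval (E x) (g (j, k)) := by
      intro j k
      have hxeq : (fun i => ∑ k', (E x) (i,k') • b k') = x := funext fun i => (hEx x i).symm
      have h6 := hzR (E x) j
      rw [hxeq] at h6
      rw [← hcoord (E x) j k, h6]
    constructor
    · intro hz jk
      rw [← hkey jk.1 jk.2, hz jk.1, map_zero, Finsupp.zero_apply]
    · intro hz j
      have h0 : ∀ k, b.repr (MvPolynomial.eval x (f j)) k = 0 := by
        intro k
        rw [hkey j k]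
        exact hz (j, k)
      have h5 : b.repr (MvPolynomial.eval x (f j)) = 0 := DFunLike.ext _ _ h0
      exact (LinearEquiv.map_eq_zero_iff b.repr).1 h5
  have hcardeq : Nat.card {x : Fin n → R // ∀ j, MvPolynomial.eval x (f j) = 0}
      = Nat.card {y : Fin n × Fin N → ZMod p //
          ∀ jk : Fin r × Fin N, MvPolynomial.eval y (g jk) = 0} := by
    refine Nat.card_congr (Equiv.subtypeEquiv E ?_)
    intro x
    exact hcond x
  rw [hcardeq]
  -- numeric hypothesis
  have hsum : ∑ jk : Fin r × Fin N, (f jk.1).totalDegree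
      = N * ∑ j, (f j).totalDegree := by
    rw [Fintype.sum_prod_type]
    rw [Finset.sum_congr rfl fun j _ => Finset.sum_const ((f j).totalDegree)]
    simp [Finset.mul_sum, Finset.card_univ, mul_comm]
  have hDQ : (0:ℚ) < (D:ℚ) := by exact_mod_cast hD1
  have hceil : (β : ℤ) = ⌈((N : ℚ) * ((n : ℚ) - ∑ j, ((f j).totalDegree : ℚ))) / ((D : ℕ) : ℚ)⌉ := by
    rw [hb]
    refine Int.toNat_of_nonneg ?_
    by_contra hneg
    push_neg at hneg
    have : (⌈((N : ℚ) * ((n : ℚ) - ∑ j, ((f j).totalDegree : ℚ))) / ((D : ℕ) : ℚ)⌉).toNat = 0 :=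
      Int.toNat_of_nonpos hneg.le
    rw [hb] at hβ0
    exact hβ0 this
  have h1 : ((β:ℚ) - 1) < ((N : ℚ) * ((n : ℚ) - ∑ j, ((f j).totalDegree : ℚ))) / ((D : ℕ) : ℚ) := by
    have h2 := Int.ceil_lt_add_one (((N : ℚ) * ((n : ℚ) - ∑ j, ((f j).totalDegree : ℚ))) / ((D : ℕ) : ℚ))
    have h3 : ((β:ℤ):ℚ) = (⌈((N : ℚ) * ((n : ℚ) - ∑ j, ((f j).totalDegree : ℚ))) / ((D : ℕ) : ℚ)⌉ : ℚ) := by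
      exact_mod_cast congrArg (fun z : ℤ => (z : ℚ)) hceil
    push_cast at h3
    linarith
  have h6 : ((β:ℚ) - 1) * D < (N:ℚ) * ((n:ℚ) - ∑ j, ((f j).totalDegree : ℚ)) :=
    (lt_div_iff₀ hDQ).1 h1
  have hMfin : (β - 1) * D + ∑ jk : Fin r × Fin N, (f jk.1).totalDegree
      < Fintype.card (Fin n × Fin N) := by
    rw [hsum]
    have h7 : Fintype.card (Fin n × Fin N) = n * N := by simp
    rw [h7]
    have h8 : ((β - 1 : ℕ) : ℚ) = (β:ℚ) - 1 := by
      rw [Nat.cast_sub hβ, Nat.cast_one]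
    have h9 : ((β - 1 : ℕ) : ℚ) * D + (N:ℚ) * (∑ j, ((f j).totalDegree : ℚ)) < (n:ℚ) * N := by
      rw [h8]
      nlinarith [h6]
    have h10 : ((β - 1) * D + N * ∑ j, (f j).totalDegree : ℕ) < ((n * N : ℕ) : ℚ) → _ := id
    exact_mod_cast (by push_cast; exact_mod_cast h9 :
      (((β - 1) * D + N * ∑ j, (f j).totalDegree : ℕ) : ℚ) < ((n * N : ℕ) : ℚ))
  exact katz_zmod p hp β hβ g (fun jk => (f jk.1).totalDegree) D hD1 hdegg
    (fun jk => by
      rw [hDdef]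
      exact Finset.le_sup (f := fun j => (f j).totalDegree) (Finset.mem_univ jk.1)) hMfin

end AxKatzAux

/-- **Ring-Theoretic Prime Ax-Katz Theorem.** Let `R` be a finite commutative ring of
prime characteristic `p` with `p ^ N` elements, and let `f_1, …, f_r` be multivariate
polynomials over `R` in `n` variables, each of total degree at least `1`. Then
`p ^ max(0, ⌈N (n - ∑ deg f_j) / max_j deg f_j⌉)` divides the number of common zeros. -/
theorem ring_theoretic_prime_ax_katz
    (p : ℕ) (hp : p.Prime) (N : ℕ) (hN : 1 ≤ N)
    (R : Type*) [CommRing R] [Fintype R] [CharP R p]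
    (hcard : Fintype.card R = p ^ N)
    (n r : ℕ) (hn : 1 ≤ n) (hr : 1 ≤ r)
    (f : Fin r → MvPolynomial (Fin n) R)
    (hdeg : ∀ j, 1 ≤ (f j).totalDegree) :
    p ^ (⌈((N : ℚ) * ((n : ℚ) - ∑ j, ((f j).totalDegree : ℚ))) /
          (((Finset.univ.sup fun j => (f j).totalDegree) : ℕ) : ℚ)⌉.toNat) ∣
      Nat.card {x : Fin n → R // ∀ j, MvPolynomial.eval x (f j) = 0} :=
  AxKatzAux.ring_theoretic_prime_ax_katz' p hp N hN R hcard n r hn hr f hdeg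
end

section
/- Let p be a prime, let N, n, r ≥ 1 be integers, and put A := (ℤ/pℤ)^N. For each 1 ≤ j ≤ r let f_j : A^n → A be a nonzero function and let d_j ≥ 1 be an integer with fdeg(f_j) ≤ d_j. Let Z := {x ∈ A^n : f_1(x) = ⋯ = f_r(x) = 0}. Then p^β divides #Z, where β := max(0, ⌈ N·(n − Σ_{j=1}^r d_j) / max_{j=1}^r d_j ⌉). -/
/-- The difference operator `Δ_a` sending `f` to `x ↦ f (x + a) - f x`. -/
def disc {A B : Type*} [AddCommGroup A] [AddCommGroup B] (a : A) (f : A → B) : A → B :=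
  fun x => f (x + a) - f x

/-- Iterated difference operator `Δ_{a_1} ⋯ Δ_{a_k} f` along a list `[a_1, …, a_k]`. -/
def multiDisc {A B : Type*} [AddCommGroup A] [AddCommGroup B] : List A → (A → B) → (A → B)
  | [], f => f
  | a :: l, f => disc a (multiDisc l f)

/-- `FdegLE f d` says that the functional degree of `f` is at most `d`, i.e. all
`(d+1)`-fold iterated differences of `f` vanish. -/
def FdegLE {A B : Type*} [AddCommGroup A] [AddCommGroup B] (f : A → B) (d : ℕ) : Prop :=
  ∀ l : List A, l.length = d + 1 → multiDisc l f = 0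

namespace AxKatz

variable {A B C : Type*} [AddCommGroup A] [AddCommGroup B] [AddCommGroup C]

@[simp] lemma multiDisc_nil (f : A → B) : multiDisc [] f = f := rfl
@[simp] lemma multiDisc_cons (a : A) (l : List A) (f : A → B) :
    multiDisc (a :: l) f = disc a (multiDisc l f) := rfl

lemma disc_add (a : A) (f g : A → B) : disc a (f + g) = disc a f + disc a g := by
  funext x; simp [disc]; abel

lemma disc_neg (a : A) (f : A → B) : disc a (-f) = -(disc a f) := by
  funext x; simp [disc]; abel

@[simp] lemma disc_zero_fun (a : A) : disc a (0 : A → B) = 0 := by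
  funext x; simp [disc]

lemma multiDisc_add (l : List A) (f g : A → B) :
    multiDisc l (f + g) = multiDisc l f + multiDisc l g := by
  induction l with
  | nil => rfl
  | cons a l ih => simp [ih, disc_add]

lemma multiDisc_neg (l : List A) (f : A → B) : multiDisc l (-f) = -(multiDisc l f) := by
  induction l with
  | nil => rfl
  | cons a l ih => simp [ih, disc_neg]

@[simp] lemma multiDisc_zero_fun (l : List A) : multiDisc l (0 : A → B) = 0 := by
  induction l with
  | nil => rfl
  | cons a l ih => simp [ih]

/-- `multiDisc l` as an additive monoid hom. -/
def multiDiscHom (l : List A) : (A → B) →+ (A → B) where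
  toFun := multiDisc l
  map_zero' := multiDisc_zero_fun l
  map_add' := multiDisc_add l

lemma multiDisc_sum {ι : Type*} (s : Finset ι) (l : List A) (f : ι → A → B) :
    multiDisc l (∑ i ∈ s, f i) = ∑ i ∈ s, multiDisc l (f i) :=
  map_sum (multiDiscHom l) f s

lemma multiDisc_append (l₁ l₂ : List A) (f : A → B) :
    multiDisc (l₁ ++ l₂) f = multiDisc l₁ (multiDisc l₂ f) := by
  induction l₁ with
  | nil => rfl
  | cons a l ih => simp [ih]

/-- post-composition with an additive hom commutes with differences -/
lemma disc_comp_hom (φ : B →+ C) (a : A) (f : A → B) :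
    disc a (fun x => φ (f x)) = fun x => φ (disc a f x) := by
  funext x; simp [disc]

lemma multiDisc_comp_hom (φ : B →+ C) (l : List A) (f : A → B) :
    multiDisc l (fun x => φ (f x)) = fun x => φ (multiDisc l f x) := by
  induction l with
  | nil => rfl
  | cons a l ih => simp [ih, disc_comp_hom φ a (multiDisc l f)]

/-- pre-composition with a "affine-compatible" map -/
lemma multiDisc_comp_pre (ι : A → B) (η : A → B) (hι : ∀ x a, ι (x + a) = ι x + η a)
    (l : List A) (f : B → C) :
    multiDisc l (fun x => f (ι x)) = fun x => multiDisc (l.map η) f (ι x) := by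
  induction l with
  | nil => rfl
  | cons a l ih =>
      funext x
      simp only [multiDisc_cons, List.map_cons, disc, ih]
      rw [hι x a]

lemma multiDisc_const_mul {R : Type*} [Ring R] (c : R) (l : List A) (f : A → R) :
    multiDisc l (fun x => c * f x) = fun x => c * multiDisc l f x := by
  induction l with
  | nil => rfl
  | cons a l ih => funext x; simp only [multiDisc_cons, disc, ih]; rw [mul_sub]

lemma multiDisc_const_ne_nil (l : List A) (hl : l ≠ []) (c : B) :
    multiDisc l (fun _ => c) = 0 := by
  induction l with
  | nil => exact absurd rfl hl
  | cons a l ih =>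
      cases l with
      | nil => funext x; simp [disc]
      | cons b l' => simp [ih]

/-- degree bound kills long differences -/
lemma fdeg_multiDisc_eq_zero {f : A → B} {d : ℕ} (hf : FdegLE f d)
    {l : List A} (hl : d < l.length) : multiDisc l f = 0 := by
  have h2 : l = l.take (l.length - (d+1)) ++ l.drop (l.length - (d+1)) := (List.take_append_drop _ l).symm
  have hdrop : (l.drop (l.length - (d+1))).length = d + 1 := by
    rw [List.length_drop]; omega
  rw [h2, multiDisc_append, hf _ hdrop, multiDisc_zero_fun]

lemma fdeg_comp_hom {f : A → B} {d : ℕ} (hf : FdegLE f d) (φ : B →+ C) :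
    FdegLE (fun x => φ (f x)) d := by
  intro l hl
  rw [multiDisc_comp_hom, hf l hl]
  funext x; simp

lemma fdeg_const_mul {R : Type*} [Ring R] {f : A → R} {d : ℕ} (hf : FdegLE f d) (c : R) :
    FdegLE (fun x => c * f x) d := by
  intro l hl
  rw [multiDisc_const_mul, hf l hl]
  funext x; simp


end AxKatz

open AddSubgroup


section helpers
variable {M : Type*} [AddCommGroup M]

lemma closure_map_helper {S T : Set M} (Φ : M → M) (h0 : Φ 0 = 0)
    (hadd : ∀ a b, Φ (a + b) = Φ a + Φ b) (hneg : ∀ a, Φ (-a) = - Φ a)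
    (h : ∀ x ∈ S, Φ x ∈ closure T) : ∀ x ∈ closure S, Φ x ∈ closure T := by
  intro x hx
  induction hx using AddSubgroup.closure_induction with
  | mem y hy => exact h y hy
  | zero => rw [h0]; exact zero_mem _
  | add a b _ _ ha hb => rw [hadd]; exact add_mem ha hb
  | neg a _ ha => rw [hneg]; exact neg_mem ha

lemma closure_prop_helper {S : Set M} (P : M → Prop) (h0 : P 0)
    (hadd : ∀ a b, P a → P b → P (a + b)) (hneg : ∀ a, P a → P (-a))
    (h : ∀ x ∈ S, P x) : ∀ x ∈ closure S, P x := by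
  intro x hx
  induction hx using AddSubgroup.closure_induction with
  | mem y hy => exact h y hy
  | zero => exact h0
  | add a b _ _ ha hb => exact hadd a b ha hb
  | neg a _ ha => exact hneg a ha

end helpers

section ceil

lemma ceil_div_le_mul (y D : ℕ) (hD : 1 ≤ D) : y ≤ ((y + D - 1) / D) * D := by
  rcases Nat.eq_zero_or_pos y with hy | hy
  · simp [hy]
  have h1 : y + D - 1 = (y - 1) + D := by omega
  rw [h1, Nat.add_div_right _ (by omega)]
  have h2 := Nat.div_add_mod (y - 1) D
  have h3 := Nat.mod_lt (y - 1) (y := D) (by omega)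
  have h4 : ((y-1)/D + 1) * D = D * ((y-1)/D) + D := by ring
  omega

lemma ceil_div_lt_of_pos (y D : ℕ) (hD : 1 ≤ D) (hpos : 1 ≤ (y + D - 1) / D) :
    ((y + D - 1) / D - 1) * D < y := by
  rcases Nat.eq_zero_or_pos y with hy | hy
  · exfalso
    have : (0 + D - 1) / D = 0 := Nat.div_eq_of_lt (by omega)
    rw [hy] at hpos; omega
  have h1 : y + D - 1 = (y - 1) + D := by omega
  rw [h1, Nat.add_div_right _ (by omega)]
  have h2 := Nat.div_add_mod (y - 1) D
  have h3 := Nat.mod_lt (y - 1) (y := D) (by omega)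
  have h4 : ((y-1)/D + 1 - 1) * D = D * ((y-1)/D) := by simp; ring
  omega

lemma le_ceil_div_of_lt (y D t : ℕ) (hD : 1 ≤ D) (h : t * D < y) :
    t + 1 ≤ (y + D - 1) / D := by
  by_contra hc
  push_neg at hc
  have h2 : (y + D - 1) / D ≤ t := by omega
  have := ceil_div_le_mul y D hD
  have h3 : ((y + D - 1) / D) * D ≤ t * D := Nat.mul_le_mul_right D h2
  omega
end ceil


open Polynomial


noncomputable section
namespace AxKatz

variable (p : ℕ) [hp : Fact p.Prime]

abbrev CycRing : Type := Polynomial ℤ ⧸ Ideal.span {Polynomial.cyclotomic p ℤ}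

instance : NeZero p := ⟨hp.out.ne_zero⟩

def zeta : CycRing p := Ideal.Quotient.mk _ Polynomial.X

lemma cyclo_prime : Prime (cyclotomic p ℤ) :=
  (UniqueFactorizationMonoid.irreducible_iff_prime).mp (cyclotomic.irreducible hp.out.pos)

instance : IsDomain (CycRing p) := by
  have hprime : (Ideal.span {cyclotomic p ℤ}).IsPrime :=
    (Ideal.span_singleton_prime (cyclo_prime p).ne_zero).mpr (cyclo_prime p)
  exact Ideal.Quotient.isDomain _

lemma mk_cyclotomic_eq_zero :
    Ideal.Quotient.mk (Ideal.span {Polynomial.cyclotomic p ℤ}) (cyclotomic p ℤ) = 0 :=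
  Ideal.Quotient.eq_zero_iff_mem.mpr (Ideal.mem_span_singleton_self _)

lemma zeta_pow_p : (zeta p) ^ p = 1 := by
  have hdvd : cyclotomic p ℤ ∣ X ^ p - 1 := cyclotomic.dvd_X_pow_sub_one p ℤ
  have : Ideal.Quotient.mk (Ideal.span {Polynomial.cyclotomic p ℤ}) (X ^ p - 1) = 0 :=
    Ideal.Quotient.eq_zero_iff_mem.mpr (Ideal.mem_span_singleton.mpr hdvd)
  have h2 : (zeta p) ^ p - 1 = 0 := by
    simpa [zeta, map_sub, map_pow] using this
  linear_combination h2

lemma sum_zeta_pow : ∑ i ∈ Finset.range p, (zeta p) ^ i = 0 := by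
  have h : (Ideal.Quotient.mk (Ideal.span {Polynomial.cyclotomic p ℤ})) (∑ i ∈ Finset.range p, (X:Polynomial ℤ) ^ i) = 0 := by
    rw [← cyclotomic_prime ℤ p]; exact mk_cyclotomic_eq_zero p
  simpa [zeta, map_sum, map_pow] using h

/-- The homomorphism to `ℂ` sending `zeta` to `exp(2πi/p)`. -/
def psi : CycRing p →+* ℂ := by
  refine Ideal.Quotient.lift _ (Polynomial.aeval (Complex.exp (2 * Real.pi * Complex.I / p))).toRingHom ?_
  intro a ha
  obtain ⟨c, rfl⟩ := Ideal.mem_span_singleton.mp ha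
  have hz : IsPrimitiveRoot (Complex.exp (2 * Real.pi * Complex.I / p)) p :=
    Complex.isPrimitiveRoot_exp p hp.out.ne_zero
  have hroot : (Polynomial.aeval (Complex.exp (2 * Real.pi * Complex.I / p))) (cyclotomic p ℤ) = 0 := by
    rw [Polynomial.aeval_def, Polynomial.eval₂_eq_eval_map, algebraMap_int_eq, Polynomial.map_cyclotomic_int]
    exact hz.isRoot_cyclotomic hp.out.pos
  simp [map_mul, hroot]

lemma psi_zeta : psi p (zeta p) = Complex.exp (2 * Real.pi * Complex.I / p) := by
  simp [psi, zeta]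

lemma zeta_prim : IsPrimitiveRoot (zeta p) p := by
  constructor
  · exact zeta_pow_p p
  · intro l hl
    have hz : IsPrimitiveRoot (Complex.exp (2 * Real.pi * Complex.I / p)) p :=
      Complex.isPrimitiveRoot_exp p hp.out.ne_zero
    apply hz.dvd_of_pow_eq_one
    have := congrArg (psi p) hl
    simpa [map_pow, psi_zeta] using this

lemma zeta_ne_one : zeta p ≠ 1 := by
  intro h
  have hz : IsPrimitiveRoot (Complex.exp (2 * Real.pi * Complex.I / p)) p :=
    Complex.isPrimitiveRoot_exp p hp.out.ne_zero
  have := congrArg (psi p) h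
  rw [psi_zeta, map_one] at this
  exact hz.ne_one hp.out.one_lt this

lemma one_sub_zeta_ne_zero : 1 - zeta p ≠ 0 :=
  sub_ne_zero.mpr (Ne.symm (zeta_ne_one p))

lemma zeta_pow_mod (a : ℕ) : (zeta p) ^ (a % p) = (zeta p) ^ a := by
  conv_rhs => rw [← Nat.div_add_mod a p]
  rw [pow_add, pow_mul, zeta_pow_p, one_pow, one_mul]

lemma zeta_pow_val_add (u v : ZMod p) :
    (zeta p) ^ ((u + v).val) = (zeta p) ^ u.val * (zeta p) ^ v.val := by
  rw [ZMod.val_add, zeta_pow_mod, pow_add]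

/-- The homomorphism to `ZMod p` sending `zeta` to `1`. -/
def phi : CycRing p →+* ZMod p := by
  refine Ideal.Quotient.lift _ (Polynomial.aeval (1 : ZMod p)).toRingHom ?_
  intro a ha
  obtain ⟨c, rfl⟩ := Ideal.mem_span_singleton.mp ha
  have hroot : (Polynomial.aeval (1 : ZMod p)) (cyclotomic p ℤ) = 0 := by
    rw [Polynomial.aeval_def, Polynomial.eval₂_eq_eval_map, algebraMap_int_eq, Polynomial.map_cyclotomic_int,
      Polynomial.eval_one_cyclotomic_prime]
    exact ZMod.natCast_self p
  simp [map_mul, hroot]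

lemma phi_zeta : phi p (zeta p) = 1 := by
  simp [phi, zeta]

lemma base_dvd (M : ℤ) (h : (1 - zeta p) ∣ (M : CycRing p)) : (p : ℤ) ∣ M := by
  obtain ⟨c, hc⟩ := h
  have := congrArg (phi p) hc
  rw [map_intCast, map_mul, map_sub, map_one, phi_zeta, sub_self, zero_mul] at this
  exact (ZMod.intCast_zmod_eq_zero_iff_dvd M p).mp this

lemma geo_unit {i : ℕ} (h0 : 0 < i) (hip : i < p) :
    ∃ w : (CycRing p)ˣ, 1 - (zeta p) ^ i = (1 - zeta p) * w := by
  set ζ := zeta p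
  have hη : (1 - ζ) * (∑ j ∈ Finset.range i, ζ ^ j) = 1 - ζ ^ i := by
    have := geom_sum_mul ζ i
    linear_combination -this
  have hi_ne : (i : ZMod p) ≠ 0 := by
    rw [Ne, ZMod.natCast_eq_zero_iff]
    intro hdvd
    exact absurd (Nat.le_of_dvd h0 hdvd) (by omega)
  set i' := ((i : ZMod p)⁻¹).val with hi'
  have hii' : ((i * i' : ℕ) : ZMod p) = ((1 : ℕ) : ZMod p) := by
    push_cast
    rw [hi', ZMod.natCast_val, ZMod.cast_id]
    field_simp
  have hmod : (i * i') % p = 1 % p := (ZMod.natCast_eq_natCast_iff' _ _ _).mp hii'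
  have hθ : (∑ j ∈ Finset.range i', (ζ ^ i) ^ j) * (ζ ^ i - 1) = ζ - 1 := by
    rw [geom_sum_mul, ← pow_mul, ← zeta_pow_mod p (i * i'), hmod, zeta_pow_mod, pow_one]
  have hηθ : (∑ j ∈ Finset.range i, ζ ^ j) * (∑ j ∈ Finset.range i', (ζ ^ i) ^ j) = 1 := by
    have hcancel : (1 - ζ) * ((∑ j ∈ Finset.range i, ζ ^ j) * (∑ j ∈ Finset.range i', (ζ ^ i) ^ j)) = (1 - ζ) * 1 := by
      rw [← mul_assoc, hη]
      linear_combination -hθ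
    exact mul_left_cancel₀ (one_sub_zeta_ne_zero p) hcancel
  refine ⟨⟨∑ j ∈ Finset.range i, ζ ^ j, ∑ j ∈ Finset.range i', (ζ ^ i) ^ j, hηθ, by
    rw [mul_comm] at hηθ; exact hηθ⟩, ?_⟩
  simp only [Units.val_mk]
  rw [← hη]

lemma prod_unit_helper {R : Type*} [CommRing R] (π : R) (S : Finset R)
    (h : ∀ μ ∈ S, ∃ w : Rˣ, 1 - μ = π * w) :
    ∃ u : Rˣ, ∏ μ ∈ S, (1 - μ) = π ^ S.card * u := by
  classical
  induction S using Finset.induction with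
  | empty => exact ⟨1, by simp⟩
  | @insert a s hnotmem ih =>
      obtain ⟨u, hu⟩ := ih (fun μ hμ => h μ (Finset.mem_insert_of_mem hμ))
      obtain ⟨w, hw⟩ := h a (Finset.mem_insert_self a s)
      refine ⟨w * u, ?_⟩
      rw [Finset.prod_insert hnotmem, hu, hw, Finset.card_insert_of_notMem hnotmem]
      push_cast
      ring

lemma p_eq_unit_mul : ∃ u : (CycRing p)ˣ, (p : CycRing p) = (1 - zeta p) ^ (p - 1) * u := by
  have hprim := zeta_prim p
  have hfact := cyclotomic_eq_prod_X_sub_primitiveRoots hprim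
  have heval : (p : CycRing p) = ∏ μ ∈ primitiveRoots p (CycRing p), (1 - μ) := by
    have h1 : Polynomial.eval 1 (cyclotomic p (CycRing p)) = (p : CycRing p) :=
      Polynomial.eval_one_cyclotomic_prime
    rw [hfact] at h1
    simp only [Polynomial.eval_prod, Polynomial.eval_sub, Polynomial.eval_X, Polynomial.eval_C] at h1
    exact h1.symm
  have hgen : ∀ μ ∈ primitiveRoots p (CycRing p), ∃ w : (CycRing p)ˣ, 1 - μ = (1 - zeta p) * w := by
    intro μ hμ
    have hμprim : IsPrimitiveRoot μ p := (mem_primitiveRoots hp.out.pos).mp hμ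
    obtain ⟨i, hip, hζi⟩ := hprim.eq_pow_of_pow_eq_one hμprim.pow_eq_one
    have hi0 : 0 < i := by
      rcases Nat.eq_zero_or_pos i with h0 | h0
      · exfalso
        apply hμprim.ne_one hp.out.one_lt
        rw [← hζi, h0, pow_zero]
      · exact h0
    obtain ⟨w, hw⟩ := geo_unit p hi0 hip
    exact ⟨w, by rw [← hζi, hw]⟩
  obtain ⟨u, hu⟩ := prod_unit_helper (1 - zeta p) (primitiveRoots p (CycRing p)) hgen
  refine ⟨u, ?_⟩
  have hcard : (primitiveRoots p (CycRing p)).card = p - 1 := by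
    rw [hprim.card_primitiveRoots, Nat.totient_prime hp.out]
  rw [heval, hu, hcard]

lemma desc (k : ℕ) (M : ℤ) (h : (1 - zeta p) ^ (k * (p - 1) + 1) ∣ (M : CycRing p)) :
    (p : ℤ) ^ (k + 1) ∣ M := by
  induction k generalizing M with
  | zero =>
      simp only [zero_mul, zero_add, pow_one] at h ⊢
      exact base_dvd p M h
  | succ k ih =>
      have h1 : (1 - zeta p) ∣ (M : CycRing p) :=
        dvd_trans (dvd_pow_self _ (Nat.succ_ne_zero _)) h
      obtain ⟨M₁, hM₁⟩ := base_dvd p M h1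
      obtain ⟨u, hu⟩ := p_eq_unit_mul p
      have hcast : (M : CycRing p) = (1 - zeta p) ^ (p - 1) * ((u : CycRing p) * (M₁ : CycRing p)) := by
        rw [hM₁]; push_cast; rw [hu]; ring
      have hexp : (k + 1) * (p - 1) + 1 = (p - 1) + (k * (p - 1) + 1) := by ring
      rw [hexp, pow_add, hcast] at h
      have h2 : (1 - zeta p) ^ (k * (p - 1) + 1) ∣ (u : CycRing p) * (M₁ : CycRing p) :=
        (mul_dvd_mul_iff_left (pow_ne_zero _ (one_sub_zeta_ne_zero p))).mp h
      have h3 : (1 - zeta p) ^ (k * (p - 1) + 1) ∣ (M₁ : CycRing p) :=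
        (Units.dvd_mul_left).mp h2
      have h4 := ih M₁ h3
      rw [hM₁]
      calc (p:ℤ)^(k+2) = (p:ℤ) * (p:ℤ)^(k+1) := by ring
      _ ∣ (p:ℤ) * M₁ := mul_dvd_mul_left _ h4

lemma one_sub_zeta_dvd (a : ℕ) : (1 - zeta p) ∣ (1 - (zeta p) ^ a) := by
  have := geom_sum_mul (zeta p) a
  exact ⟨∑ i ∈ Finset.range a, (zeta p)^i, by linear_combination this⟩

end AxKatz


namespace AxKatz

section chars
variable {G : Type*} [AddCommGroup G] (p : ℕ) [hp : Fact p.Prime]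

/-- sum over ZMod p as sum over range p -/
lemma sum_range_zmod {M : Type*} [AddCommMonoid M] (F : ZMod p → M) :
    ∑ c ∈ Finset.range p, F ((c : ℕ) : ZMod p) = ∑ u : ZMod p, F u := by
  apply Finset.sum_nbij' (fun c => ((c : ℕ) : ZMod p)) (fun u => u.val)
  · intro a _; exact Finset.mem_univ _
  · intro u _; exact Finset.mem_range.mpr (ZMod.val_lt u)
  · intro a ha; exact ZMod.val_cast_of_lt (Finset.mem_range.mp ha)
  · intro u _; exact ZMod.natCast_rightInverse u
  · intro a _; rfl

lemma orth (w : ZMod p) (hw : w ≠ 0) :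
    ∑ c ∈ Finset.range p, (zeta p) ^ (((c : ℕ) : ZMod p) * w).val = 0 := by
  rw [sum_range_zmod p (fun u => (zeta p) ^ ((u * w).val))]
  have hbij : ∑ u : ZMod p, (zeta p) ^ ((u * w).val) = ∑ v : ZMod p, (zeta p) ^ (v.val) :=
    Fintype.sum_bijective (fun u => u * w) (Equiv.mulRight₀ w hw).bijective _ _ (fun u => rfl)
  rw [hbij, ← sum_range_zmod p (fun v => (zeta p) ^ (v.val)), ← sum_zeta_pow p]
  apply Finset.sum_congr rfl
  intro c hc
  rw [ZMod.val_cast_of_lt (Finset.mem_range.mp hc)]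

/-- the character function attached to `g` -/
def chi (g : G → ZMod p) : G → CycRing p := fun x => (zeta p) ^ ((g x).val)

lemma disc_mul {R : Type*} [CommRing R] (b : G) (F H : G → R) :
    disc b (F * H) = F * disc b H + disc b F * H + disc b F * disc b H := by
  funext x
  simp only [disc, Pi.add_apply, Pi.mul_apply]
  ring

lemma disc_sub_one {R : Type*} [CommRing R] (b : G) (F : G → R) :
    disc b (F - 1) = disc b F := by
  funext x; simp [disc]

lemma disc_chi (g : G → ZMod p) (b : G) :
    disc b (chi p g) = chi p g * (chi p (disc b g) - 1) := by
  funext x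
  show (zeta p) ^ ((g (x+b)).val) - (zeta p) ^ ((g x).val)
      = (zeta p) ^ ((g x).val) * ((zeta p) ^ ((disc b g x).val) - 1)
  have hgx : g x + disc b g x = g (x + b) := by simp [disc]
  have hx : (zeta p) ^ ((g (x+b)).val)
      = (zeta p) ^ ((g x).val) * (zeta p) ^ ((disc b g x).val) := by
    rw [← zeta_pow_val_add, hgx]
  rw [hx]; ring

variable (g : G → ZMod p)

/-- generators: `χ_g · ∏ (χ_{Δ_l g} - 1)` of weight `≥ k` -/
def Sgen (k : ℕ) : Set (G → CycRing p) :=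
  { h | ∃ ls : List (List G), (∀ l ∈ ls, l ≠ []) ∧ k ≤ (ls.map List.length).sum ∧
      h = chi p g * (ls.map (fun l => chi p (multiDisc l g) - 1)).prod }

lemma Sgen_anti {k k' : ℕ} (hk : k ≤ k') : Sgen p g k' ⊆ Sgen p g k := by
  rintro h ⟨ls, h1, h2, h3⟩
  exact ⟨ls, h1, le_trans hk h2, h3⟩

lemma chi_mem_Sgen : chi p g ∈ Sgen p g 0 :=
  ⟨[], by simp, by simp, by rw [List.map_nil, List.prod_nil, mul_one]⟩

lemma mulgen (l₁ : List G) (hl₁ : l₁ ≠ []) (k : ℕ) :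
    ∀ h ∈ closure (Sgen p g k),
      (chi p (multiDisc l₁ g) - 1) * h ∈ closure (Sgen p g (k + l₁.length)) := by
  apply closure_map_helper (fun h => (chi p (multiDisc l₁ g) - 1) * h)
    (by exact mul_zero _) (fun a b => mul_add _ a b) (fun a => mul_neg _ a)
  rintro h ⟨ls, h1, h2, h3⟩
  apply AddSubgroup.subset_closure
  refine ⟨l₁ :: ls, ?_, ?_, ?_⟩
  · intro l hl
    rcases List.mem_cons.mp hl with h | h
    · rw [h]; exact hl₁
    · exact h1 l h
  · simp only [List.map_cons, List.sum_cons]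
    omega
  · rw [h3]
    simp only [List.map_cons, List.prod_cons]
    ring

lemma disc_gen_step (b : G) (ls : List (List G)) (hls : ∀ l ∈ ls, l ≠ []) :
    disc b (chi p g * (ls.map (fun l => chi p (multiDisc l g) - 1)).prod)
      ∈ closure (Sgen p g ((ls.map List.length).sum + 1)) := by
  induction ls with
  | nil =>
      simp only [List.map_nil, List.prod_nil, mul_one, List.sum_nil]
      rw [disc_chi]
      apply AddSubgroup.subset_closure
      refine ⟨[[b]], by simp, by simp, ?_⟩
      rw [List.map_cons, List.map_nil, List.prod_cons, List.prod_nil, mul_one]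
      rfl
  | cons l₀ ls ih =>
      have hls' : ∀ l ∈ ls, l ≠ [] := fun l hl => hls l (List.mem_cons_of_mem _ hl)
      have ih' := ih hls'
      set F := chi p (multiDisc l₀ g) - 1 with hF
      set Gb := chi p (multiDisc (b :: l₀) g) - 1 with hGb
      set h' := chi p g * (ls.map (fun l => chi p (multiDisc l g) - 1)).prod with hh'
      have hsplit : chi p g * ((l₀ :: ls).map (fun l => chi p (multiDisc l g) - 1)).prod
          = F * h' := by
        simp only [List.map_cons, List.prod_cons, hh', hF]
        ring
      rw [hsplit, disc_mul]
      have hdF : disc b F = F * Gb + Gb := by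
        rw [hF, disc_sub_one, disc_chi]
        have : disc b (multiDisc l₀ g) = multiDisc (b :: l₀) g := rfl
        rw [this, ← hGb]
        ring
      set W := ((l₀ :: ls).map List.length).sum with hW
      have hWls : W = (ls.map List.length).sum + l₀.length := by
        simp only [hW, List.map_cons, List.sum_cons]; omega
      have hl₀ : l₀ ≠ [] := hls l₀ List.mem_cons_self
      have hbl₀ : (b :: l₀) ≠ [] := by simp
      -- term 1 : F * disc b h'
      have t1 : F * disc b h' ∈ closure (Sgen p g (W + 1)) := by
        have h0 := mulgen p g l₀ hl₀ ((ls.map List.length).sum + 1) (disc b h') ih'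
        have hle : W + 1 ≤ (ls.map List.length).sum + 1 + l₀.length := by omega
        exact closure_mono (Sgen_anti p g hle) h0
      -- term 2 : disc b F * h'
      have t2 : disc b F * h' ∈ closure (Sgen p g (W + 1)) := by
        rw [hdF]
        have e1 : (F * Gb + Gb) * h' = F * (Gb * h') + Gb * h' := by ring
        rw [e1]
        apply add_mem
        · -- F * (Gb * h') : generator l₀ :: (b::l₀) :: ls
          apply AddSubgroup.subset_closure
          refine ⟨l₀ :: (b :: l₀) :: ls, ?_, ?_, ?_⟩
          · intro l hl
            rcases List.mem_cons.mp hl with h | h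
            · rw [h]; exact hl₀
            · rcases List.mem_cons.mp h with h | h
              · rw [h]; exact hbl₀
              · exact hls' l h
          · simp only [List.map_cons, List.sum_cons, List.length_cons]
            omega
          · simp only [List.map_cons, List.prod_cons, hh', hF, hGb]
            ring
        · -- Gb * h' : generator (b::l₀) :: ls
          apply AddSubgroup.subset_closure
          refine ⟨(b :: l₀) :: ls, ?_, ?_, ?_⟩
          · intro l hl
            rcases List.mem_cons.mp hl with h | h
            · rw [h]; exact hbl₀
            · exact hls' l h
          · simp only [List.map_cons, List.sum_cons, List.length_cons]
            omega
          · simp only [List.map_cons, List.prod_cons, hh', hGb]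
            ring
      -- term 3 : disc b F * disc b h'
      have t3 : disc b F * disc b h' ∈ closure (Sgen p g (W + 1)) := by
        rw [hdF]
        have e1 : (F * Gb + Gb) * disc b h' = F * (Gb * disc b h') + Gb * disc b h' := by ring
        rw [e1]
        have hGbdisc : Gb * disc b h' ∈ closure (Sgen p g ((ls.map List.length).sum + 1 + (b :: l₀).length)) :=
          mulgen p g (b :: l₀) hbl₀ _ (disc b h') ih'
        apply add_mem
        · have h5 := mulgen p g l₀ hl₀ _ _ hGbdisc
          have hle : W + 1 ≤ (ls.map List.length).sum + 1 + (b :: l₀).length + l₀.length := by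
            simp only [List.length_cons]; omega
          exact closure_mono (Sgen_anti p g hle) h5
        · have hle : W + 1 ≤ (ls.map List.length).sum + 1 + (b :: l₀).length := by
            simp only [List.length_cons]; omega
          exact closure_mono (Sgen_anti p g hle) hGbdisc
      exact add_mem (add_mem t1 t2) t3

lemma disc_gen (b : G) (k : ℕ) :
    ∀ h ∈ closure (Sgen p g k), disc b h ∈ closure (Sgen p g (k + 1)) := by
  apply closure_map_helper (disc b) (disc_zero_fun b) (disc_add b) (disc_neg b)
  rintro h ⟨ls, h1, h2, h3⟩
  have := disc_gen_step p g b ls h1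
  rw [← h3] at this
  exact closure_mono (Sgen_anti p g (by omega)) this

lemma chain (l : List G) : multiDisc l (chi p g) ∈ closure (Sgen p g l.length) := by
  induction l with
  | nil => exact subset_closure (chi_mem_Sgen p g)
  | cons b l ih =>
      have := disc_gen p g b l.length (multiDisc l (chi p g)) ih
      simpa using this

lemma list_pow_dvd_prod {R : Type*} [CommRing R] (L : List R) (δ : R)
    (h : ∀ a ∈ L, δ ∣ a) : δ ^ L.length ∣ L.prod := by
  induction L with
  | nil => simp
  | cons a L ih =>
      simp only [List.length_cons, List.prod_cons, pow_succ]
      exact mul_comm δ (δ ^ L.length) ▸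
        mul_dvd_mul (h a List.mem_cons_self) (ih (fun x hx => h x (List.mem_cons_of_mem _ hx)))

lemma prod_fun_apply (ls : List (List G)) (x : G) :
    ((ls.map (fun l => chi p (multiDisc l g) - 1)).prod) x
      = (ls.map (fun l => chi p (multiDisc l g) x - 1)).prod := by
  induction ls with
  | nil => simp
  | cons a ls ih => simp [ih]

lemma pointwise_dvd {d : ℕ} (hg : FdegLE g d) (k e : ℕ)
    (he : ∀ c : ℕ, k ≤ c * d → e ≤ c) :
    ∀ h ∈ closure (Sgen p g k), ∀ x, (1 - zeta p) ^ e ∣ h x := by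
  apply closure_prop_helper
  · intro x; simp
  · intro a b ha hb x
    simpa [Pi.add_apply] using dvd_add (ha x) (hb x)
  · intro a ha x
    rw [Pi.neg_apply]
    exact (ha x).neg_right
  · rintro h ⟨ls, h1, h2, h3⟩ x
    rw [h3]
    simp only [Pi.mul_apply]
    rw [prod_fun_apply p g]
    by_cases hlong : ∃ l ∈ ls, d < l.length
    · obtain ⟨l, hl, hdl⟩ := hlong
      have hzero : multiDisc l g = 0 := fdeg_multiDisc_eq_zero hg hdl
      have hmem : (0 : CycRing p) ∈ ls.map (fun l => chi p (multiDisc l g) x - 1) := by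
        refine List.mem_map.mpr ⟨l, hl, ?_⟩
        rw [hzero]
        show (zeta p) ^ ((0 : G → ZMod p) x).val - 1 = 0
        simp [ZMod.val_zero]
      rw [List.prod_eq_zero hmem, mul_zero]
      exact dvd_zero _
    · push_neg at hlong
      have hsum : (ls.map List.length).sum ≤ ls.length * d := by
        calc (ls.map List.length).sum ≤ (ls.map List.length).length • d := by
              apply List.sum_le_card_nsmul
              intro a ha
              obtain ⟨l, hl, rfl⟩ := List.mem_map.mp ha
              exact hlong l hl
        _ = ls.length * d := by simp [smul_eq_mul]
      have hc : e ≤ ls.length := he ls.length (le_trans h2 hsum)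
      have hdvd : (1 - zeta p) ^ (ls.map (fun l => chi p (multiDisc l g) x - 1)).length ∣
          (ls.map (fun l => chi p (multiDisc l g) x - 1)).prod := by
        apply list_pow_dvd_prod
        intro a ha
        obtain ⟨l, hl, rfl⟩ := List.mem_map.mp ha
        have := one_sub_zeta_dvd p ((multiDisc l g x).val)
        show (1 - zeta p) ∣ (zeta p) ^ ((multiDisc l g x).val) - 1
        rw [show (zeta p) ^ ((multiDisc l g x).val) - 1 = -(1 - (zeta p) ^ ((multiDisc l g x).val)) by ring]
        exact this.neg_right
      rw [List.length_map] at hdvd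
      exact Dvd.dvd.mul_left (dvd_trans (pow_dvd_pow _ hc) hdvd) _
  -- note: χ-prefactor handled by mul_left
end chars

section key
variable {G : Type*} [AddCommGroup G] (p : ℕ) [hp : Fact p.Prime]

/-- indicator of the zero set -/
def indic (f : G → ZMod p) : G → ℤ := fun y => if f y = 0 then 1 else 0

lemma orth_fun (f : G → ZMod p) :
    (fun y => (p : CycRing p) * ((indic p f y : ℤ) : CycRing p))
      = ∑ c ∈ Finset.range p, chi p (fun y => ((c : ℕ) : ZMod p) * f y) := by
  funext y
  rw [Finset.sum_apply]
  by_cases hf : f y = 0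
  · have h1 : ∀ c ∈ Finset.range p, chi p (fun y => ((c : ℕ) : ZMod p) * f y) y = 1 := by
      intro c _
      simp [chi, hf, ZMod.val_zero]
    rw [Finset.sum_congr rfl h1, Finset.sum_const, Finset.card_range]
    simp [indic, hf]
  · have h2 : ∑ c ∈ Finset.range p, chi p (fun y => ((c : ℕ) : ZMod p) * f y) y
        = ∑ c ∈ Finset.range p, (zeta p) ^ ((((c : ℕ) : ZMod p)) * f y).val := by
      apply Finset.sum_congr rfl
      intro c _
      rfl
    rw [h2, orth p (f y) hf]
    simp [indic, hf]

lemma key_W (f : G → ZMod p) {d : ℕ} (hd : 1 ≤ d) (hf : FdegLE f d) :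
    ∀ (t : ℕ) (l : List G), (p-1)*d + t*((p-1)*d) < l.length →
      ∀ x, (p:ℤ)^(t+1) ∣ multiDisc l (indic p f) x := by
  intro t l hl x
  set m : ℤ := multiDisc l (indic p f) x with hm
  set e : ℕ := (t+1)*(p-1)+1 with he
  -- step 1: each character term is divisible by (1-ζ)^e
  have hterm : ∀ c ∈ Finset.range p,
      (1 - zeta p) ^ e ∣ multiDisc l (chi p (fun y => ((c : ℕ) : ZMod p) * f y)) x := by
    intro c _
    set g : G → ZMod p := fun y => ((c : ℕ) : ZMod p) * f y with hg
    have hgd : FdegLE g d := fdeg_const_mul hf _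
    have hchain := chain p g l
    have hee : ∀ c' : ℕ, l.length ≤ c' * d → e ≤ c' := by
      intro c' hc'
      have h1 : ((t+1)*(p-1))*d < l.length := by
        calc ((t+1)*(p-1))*d = (p-1)*d + t*((p-1)*d) := by ring
        _ < l.length := hl
      have h2 : ((t+1)*(p-1))*d < c' * d := lt_of_lt_of_le h1 hc'
      have h3 : (t+1)*(p-1) < c' := Nat.lt_of_mul_lt_mul_right h2
      omega
    exact pointwise_dvd p g hgd l.length e hee _ hchain x
  -- step 2: sum identity
  have hsum : (p : CycRing p) * ((m : ℤ) : CycRing p)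
      = ∑ c ∈ Finset.range p, multiDisc l (chi p (fun y => ((c : ℕ) : ZMod p) * f y)) x := by
    have h0 := congrArg (multiDisc l) (orth_fun p f)
    rw [multiDisc_sum] at h0
    have h1 : multiDisc l (fun y => (p : CycRing p) * ((indic p f y : ℤ) : CycRing p))
        = fun y => (p : CycRing p) * ((multiDisc l (indic p f) y : ℤ) : CycRing p) := by
      rw [multiDisc_const_mul]
      have h2 : multiDisc l (fun y => ((indic p f y : ℤ) : CycRing p))
          = fun y => ((multiDisc l (indic p f) y : ℤ) : CycRing p) :=
        multiDisc_comp_hom (Int.castRingHom (CycRing p)).toAddMonoidHom l (indic p f)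
      rw [h2]
    rw [h1] at h0
    have := congrFun h0 x
    rw [Finset.sum_apply] at this
    exact this
  have hdvd : (1 - zeta p) ^ e ∣ ((((p:ℤ) * m : ℤ)) : CycRing p) := by
    push_cast
    rw [hsum]
    exact Finset.dvd_sum hterm
  have hdesc := desc p (t+1) ((p:ℤ) * m) (by rw [he] at hdvd; exact hdvd)
  -- p^(t+2) ∣ p*m  ⇒  p^(t+1) ∣ m
  have hp0 : (p:ℤ) ≠ 0 := by
    exact_mod_cast hp.out.ne_zero
  obtain ⟨c, hc⟩ := hdesc
  refine ⟨c, ?_⟩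
  apply mul_left_cancel₀ hp0
  rw [hc]
  ring

end key

section product
variable {G : Type*} [AddCommGroup G] (p : ℕ) [hp : Fact p.Prime]

/-- The valuation-graded degree class. -/
def Wcl (e D : ℕ) (h : G → ℤ) : Prop :=
  ∀ (t : ℕ) (l : List G), e + t*D < l.length → ∀ x, (p:ℤ)^(t+1) ∣ multiDisc l h x

lemma Wcl_mono {e D D' : ℕ} (hDD : D ≤ D') {h : G → ℤ} (hw : Wcl p e D h) :
    Wcl p e D' h := by
  intro t l hl x
  exact hw t l (by have : t*D ≤ t*D' := Nat.mul_le_mul_left t hDD; omega) x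

lemma Wcl_one (D : ℕ) : Wcl p 0 D (fun (_ : G) => (1:ℤ)) := by
  intro t l hl x
  have hnil : l ≠ [] := by
    intro h0; rw [h0] at hl; simp at hl
  rw [multiDisc_const_ne_nil l hnil 1]
  simp

lemma key_Wcl (f : G → ZMod p) {d : ℕ} (hd : 1 ≤ d) (hf : FdegLE f d) :
    Wcl p ((p-1)*d) ((p-1)*d) (indic p f) := by
  intro t l hl x
  exact key_W p f hd hf t l hl x

/-- pair generators for the Leibniz expansion -/
def Pgen (F F' : G → ℤ) (k : ℕ) : Set (G → ℤ) :=
  { h | ∃ l₁ l₂ : List G, k ≤ l₁.length + l₂.length ∧ h = multiDisc l₁ F * multiDisc l₂ F' }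

open AddSubgroup in
lemma Pgen_anti (F F' : G → ℤ) {k k' : ℕ} (hk : k ≤ k') : Pgen F F' k' ⊆ Pgen F F' k := by
  rintro h ⟨l₁, l₂, h1, h2⟩
  exact ⟨l₁, l₂, le_trans hk h1, h2⟩

open AddSubgroup in
lemma disc_Pgen (F F' : G → ℤ) (b : G) (k : ℕ) :
    ∀ h ∈ AddSubgroup.closure (Pgen F F' k), disc b h ∈ AddSubgroup.closure (Pgen F F' (k+1)) := by
  apply closure_map_helper (disc b) (disc_zero_fun b) (disc_add b) (disc_neg b)
  rintro h ⟨l₁, l₂, h1, h2⟩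
  rw [h2, disc_mul]
  have g1 : multiDisc l₁ F * disc b (multiDisc l₂ F') ∈ Pgen F F' (k+1) := by
    refine ⟨l₁, b :: l₂, by simp; omega, ?_⟩
    rfl
  have g2 : disc b (multiDisc l₁ F) * multiDisc l₂ F' ∈ Pgen F F' (k+1) := by
    refine ⟨b :: l₁, l₂, by simp; omega, ?_⟩
    rfl
  have g3 : disc b (multiDisc l₁ F) * disc b (multiDisc l₂ F') ∈ Pgen F F' (k+1) := by
    refine ⟨b :: l₁, b :: l₂, by simp; omega, ?_⟩
    rfl
  exact add_mem (add_mem (AddSubgroup.subset_closure g1) (AddSubgroup.subset_closure g2)) (AddSubgroup.subset_closure g3)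

open AddSubgroup in
lemma chain_Pgen (F F' : G → ℤ) (l : List G) :
    multiDisc l (F * F') ∈ AddSubgroup.closure (Pgen F F' l.length) := by
  induction l with
  | nil =>
      apply AddSubgroup.subset_closure
      exact ⟨[], [], by simp, rfl⟩
  | cons b l ih =>
      have := disc_Pgen F F' b l.length (multiDisc l (F * F')) ih
      simpa using this

open AddSubgroup in
lemma Wcl_mul {e e' D : ℕ} (hD : 1 ≤ D) {F F' : G → ℤ}
    (hF : Wcl p e D F) (hF' : Wcl p e' D F') : Wcl p (e+e') D (F * F') := by
  intro t l hl x
  have hchain := chain_Pgen F F' l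
  revert hchain
  have : ∀ h ∈ AddSubgroup.closure (Pgen F F' l.length), (p:ℤ)^(t+1) ∣ h x := by
    apply closure_prop_helper
    · simp
    · intro a b ha hb
      rw [Pi.add_apply]; exact dvd_add ha hb
    · intro a ha
      rw [Pi.neg_apply]; exact ha.neg_right
    · rintro h ⟨l₁, l₂, h1, h2⟩
      rw [h2, Pi.mul_apply]
      set a : ℕ := (l₁.length - e + D - 1)/D with hadef
      set bb : ℕ := (l₂.length - e' + D - 1)/D with hbdef
      have hdvd1 : (p:ℤ)^a ∣ multiDisc l₁ F x := by
        rcases Nat.eq_zero_or_pos a with h0 | h0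
        · rw [h0, pow_zero]; exact one_dvd _
        · have hy0 : l₁.length - e ≠ 0 := by
            intro hy
            rw [hadef, hy] at h0
            rw [Nat.div_eq_of_lt (by omega)] at h0
            omega
          have hlt := ceil_div_lt_of_pos (l₁.length - e) D hD (by rw [← hadef]; omega)
          rw [← hadef] at hlt
          have hlen : e + (a-1)*D < l₁.length := by omega
          have := hF (a-1) l₁ hlen x
          rwa [Nat.sub_add_cancel h0] at this
      have hdvd2 : (p:ℤ)^bb ∣ multiDisc l₂ F' x := by
        rcases Nat.eq_zero_or_pos bb with h0 | h0
        · rw [h0, pow_zero]; exact one_dvd _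
        · have hy0 : l₂.length - e' ≠ 0 := by
            intro hy
            rw [hbdef, hy] at h0
            rw [Nat.div_eq_of_lt (by omega)] at h0
            omega
          have hlt := ceil_div_lt_of_pos (l₂.length - e') D hD (by rw [← hbdef]; omega)
          rw [← hbdef] at hlt
          have hlen : e' + (bb-1)*D < l₂.length := by omega
          have := hF' (bb-1) l₂ hlen x
          rwa [Nat.sub_add_cancel h0] at this
      have hab : t + 1 ≤ a + bb := by
        have h1 : l₁.length - e ≤ a * D := ceil_div_le_mul _ _ hD
        have h2 : l₂.length - e' ≤ bb * D := ceil_div_le_mul _ _ hD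
        have h3 : l₁.length + l₂.length ≤ e + e' + (a*D + bb*D) := by omega
        have h4 : t*D < a*D + bb*D := by omega
        have h5 : t*D < (a+bb)*D := by rw [add_mul]; omega
        have h6 : t < a + bb := Nat.lt_of_mul_lt_mul_right h5
        omega
      calc (p:ℤ)^(t+1) ∣ (p:ℤ)^(a+bb) := pow_dvd_pow _ hab
      _ = (p:ℤ)^a * (p:ℤ)^bb := pow_add _ _ _
      _ ∣ multiDisc l₁ F x * multiDisc l₂ F' x := mul_dvd_mul hdvd1 hdvd2
  exact fun hc => this _ hc

open AddSubgroup in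
lemma Wcl_prod {ι : Type*} [DecidableEq ι] (s : Finset ι) (e : ι → ℕ) (F : ι → G → ℤ)
    (D : ℕ) (hD : 1 ≤ D) (h : ∀ a ∈ s, Wcl p (e a) D (F a)) :
    Wcl p (∑ a ∈ s, e a) D (fun x => ∏ a ∈ s, F a x) := by
  induction s using Finset.induction with
  | empty =>
      simpa using Wcl_one p D
  | @insert a s hnotmem ih =>
      have h1 : Wcl p (e a + ∑ b ∈ s, e b) D (F a * (fun x => ∏ b ∈ s, F b x)) :=
        Wcl_mul p hD (h a (Finset.mem_insert_self a s))
          (ih (fun b hb => h b (Finset.mem_insert_of_mem hb)))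
      rw [Finset.sum_insert hnotmem]
      have h2 : (fun x => ∏ b ∈ insert a s, F b x) = F a * (fun x => ∏ b ∈ s, F b x) := by
        funext x
        rw [Finset.prod_insert hnotmem]
        rfl
      rw [h2]
      exact h1

end product

section sumone
variable (p : ℕ) [hp : Fact p.Prime]

lemma multiDisc_nsmul {A : Type*} [AddCommGroup A] (c : ℕ) (l : List A) (u : A → ℤ) :
    multiDisc l (c • u) = c • multiDisc l u := by
  have h1 : c • u = fun x => (c : ℤ) * u x := by
    funext x; simp [nsmul_eq_mul]
  have h2 : c • multiDisc l u = fun x => (c : ℤ) * multiDisc l u x := by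
    funext x; simp [nsmul_eq_mul]
  rw [h1, h2, multiDisc_const_mul]

def shiftE : Module.End ℤ (ZMod p → ℤ) :=
  (AddMonoidHom.mk' (fun u => fun x => u (x+1)) (by intro a b; funext x; simp)).toIntLinearMap

lemma shiftE_apply (u : ZMod p → ℤ) (x : ZMod p) : shiftE p u x = u (x + 1) := rfl

def deltaE : Module.End ℤ (ZMod p → ℤ) := shiftE p - 1

lemma deltaE_apply (u : ZMod p → ℤ) : deltaE p u = disc (1 : ZMod p) u := by
  funext x
  show shiftE p u x - u x = disc 1 u x
  rw [shiftE_apply]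
  rfl

lemma deltaE_pow (k : ℕ) (u : ZMod p → ℤ) :
    ((deltaE p)^k) u = multiDisc (List.replicate k (1 : ZMod p)) u := by
  induction k with
  | zero => rfl
  | succ k ih =>
      rw [pow_succ']
      rw [List.replicate_succ, multiDisc_cons, ← ih]
      show deltaE p (((deltaE p)^k) u) = _
      rw [deltaE_apply]

lemma shiftE_pow (c : ℕ) (u : ZMod p → ℤ) (x : ZMod p) :
    ((shiftE p)^c) u x = u (x + (c : ZMod p)) := by
  induction c generalizing x with
  | zero => simp
  | succ c ih =>
      rw [pow_succ']
      have h1 : (shiftE p * (shiftE p)^c) u x = ((shiftE p)^c) u (x + 1) := by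
        rw [Module.End.mul_apply]
        rfl
      rw [h1, ih]
      congr 1
      push_cast
      ring

lemma expand_u (u : ZMod p → ℤ) (c : ℕ) :
    u ((c : ZMod p)) = ∑ k ∈ Finset.range (c+1),
      (c.choose k : ℤ) * multiDisc (List.replicate k (1:ZMod p)) u 0 := by
  have h1 : shiftE p = deltaE p + 1 := by rw [deltaE]; abel
  have h2 : (shiftE p)^c = ∑ k ∈ Finset.range (c+1),
      (deltaE p)^k * 1^(c-k) * (c.choose k : Module.End ℤ (ZMod p → ℤ)) := by
    rw [h1]
    exact (Commute.one_right (deltaE p)).add_pow c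
  have h3 := congrFun (congrArg (fun (E : Module.End ℤ (ZMod p → ℤ)) => E u) h2) (0 : ZMod p)
  rw [shiftE_pow] at h3
  rw [zero_add] at h3
  rw [LinearMap.sum_apply] at h3
  rw [Finset.sum_apply] at h3
  rw [h3]
  apply Finset.sum_congr rfl
  intro k hk
  rw [one_pow, mul_one, Module.End.mul_apply]
  have h4 : ((c.choose k : ℕ) : Module.End ℤ (ZMod p → ℤ)) u = (c.choose k : ℕ) • u :=
    Module.End.natCast_apply _ _
  rw [h4, map_nsmul, deltaE_pow]
  rw [Pi.smul_apply]
  simp [nsmul_eq_mul]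

lemma hockey (n k : ℕ) : ∑ c ∈ Finset.range n, c.choose k = n.choose (k+1) := by
  induction n with
  | zero => simp
  | succ n ih =>
      rw [Finset.sum_range_succ, ih]
      simp [Nat.choose_succ_succ, Nat.succ_eq_add_one]
      omega

lemma sum1 (u : ZMod p → ℤ) :
    ∑ x : ZMod p, u x
      = ∑ k ∈ Finset.range p, (p.choose (k+1) : ℤ) *
          multiDisc (List.replicate k (1:ZMod p)) u 0 := by
  rw [← sum_range_zmod p u]
  have h1 : ∀ c ∈ Finset.range p, u ((c:ℕ):ZMod p)
      = ∑ k ∈ Finset.range p, (c.choose k : ℤ) *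
          multiDisc (List.replicate k (1:ZMod p)) u 0 := by
    intro c hc
    rw [expand_u p u c]
    apply Finset.sum_subset
    · intro k hk
      have hc' := Finset.mem_range.mp hc
      have hk' := Finset.mem_range.mp hk
      exact Finset.mem_range.mpr (by omega)
    · intro k _ hk
      rw [Finset.mem_range, not_lt] at hk
      rw [Nat.choose_eq_zero_of_lt (by omega)]
      simp
  rw [Finset.sum_congr rfl h1, Finset.sum_comm]
  apply Finset.sum_congr rfl
  intro k _
  rw [← Finset.sum_mul]
  congr 1
  rw [← Nat.cast_sum]
  exact_mod_cast congrArg (fun (z : ℕ) => (z : ℤ)) (hockey p k)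

end sumone

section sthree
variable (p : ℕ) [hp : Fact p.Prime]

lemma cons_add_cons (m : ℕ) (a b : ZMod p) (y z : Fin m → ZMod p) :
    (Fin.cons a y : Fin (m+1) → ZMod p) + Fin.cons b z = Fin.cons (a+b) (y+z) := by
  funext i
  refine Fin.cases ?_ ?_ i
  · simp
  · intro j; simp

lemma S3 (e₀ D₀ : ℕ) (hD₀ : 1 ≤ D₀) :
    ∀ (m off γ : ℕ) (h : (Fin m → ZMod p) → ℤ),
      (∀ (t : ℕ) (l : List (Fin m → ZMod p)), e₀ + t*D₀ < off + l.length →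
          ∀ x, (p:ℤ)^(t+1) ∣ multiDisc l h x) →
      (∀ L s : ℕ, s ≤ m → (p-1)*s ≤ L →
          γ ≤ (off + L - e₀ + D₀ - 1)/D₀ + (m - s)) →
      (p:ℤ)^γ ∣ ∑ x : Fin m → ZMod p, h x := by
  intro m
  induction m with
  | zero =>
      intro off γ h hW har
      have hsum : ∑ x : Fin 0 → ZMod p, h x = h (fun i => i.elim0) := by
        apply Fintype.sum_eq_single
        intro b hb
        have hb2 : b = (fun i : Fin 0 => i.elim0) := _root_.funext fun i => i.elim0
        exact absurd hb2 hb
      rw [hsum]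
      have hbound := har 0 0 (le_refl 0) (by simp)
      simp only [Nat.sub_zero, add_zero] at hbound
      rcases Nat.eq_zero_or_pos γ with h0 | h0
      · rw [h0, pow_zero]; exact one_dvd _
      · set a : ℕ := (off - e₀ + D₀ - 1)/D₀ with hadef
        have ha1 : 1 ≤ a := le_trans h0 hbound
        have hy0 : off - e₀ ≠ 0 := by
          intro hy
          rw [hadef, hy] at ha1
          rw [Nat.div_eq_of_lt (by omega)] at ha1
          omega
        have hlt := ceil_div_lt_of_pos (off - e₀) D₀ hD₀ (by rw [← hadef]; omega)
        rw [← hadef] at hlt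
        have hlen : e₀ + (a-1)*D₀ < off + ([] : List (Fin 0 → ZMod p)).length := by
          simp only [List.length_nil, add_zero]
          omega
        have hWa := hW (a-1) ([] : List (Fin 0 → ZMod p)) hlen (fun i => i.elim0)
        rw [Nat.sub_add_cancel ha1] at hWa
        exact dvd_trans (pow_dvd_pow _ hbound) hWa
  | succ m ih =>
      intro off γ h hW har
      -- split the sum
      have hsplit : ∑ x : Fin (m+1) → ZMod p, h x
          = ∑ y : Fin m → ZMod p, ∑ c : ZMod p, h (Fin.cons c y) := by
        rw [← Fintype.sum_equiv (Fin.consEquiv (fun _ : Fin (m+1) => ZMod p))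
          (fun a => h (Fin.cons a.1 a.2)) h (fun a => rfl)]
        rw [Fintype.sum_prod_type]
        exact Finset.sum_comm
      -- inner expansion
      set u₀ : Fin (m+1) → ZMod p := Fin.cons 1 0 with hu₀
      have hinner : ∀ y : Fin m → ZMod p, ∑ c : ZMod p, h (Fin.cons c y)
          = ∑ k ∈ Finset.range p, (p.choose (k+1) : ℤ) *
              multiDisc (List.replicate k u₀) h (Fin.cons 0 y) := by
        intro y
        rw [sum1 p (fun c => h (Fin.cons c y))]
        apply Finset.sum_congr rfl
        intro k _
        congr 1
        have hcomp := multiDisc_comp_pre (fun c : ZMod p => (Fin.cons c y : Fin (m+1) → ZMod p))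
          (fun a : ZMod p => (Fin.cons a 0 : Fin (m+1) → ZMod p))
          (by
            intro x a
            simp [cons_add_cons])
          (List.replicate k (1 : ZMod p)) h
        have := congrFun hcomp (0 : ZMod p)
        rw [List.map_replicate] at this
        exact this
      rw [hsplit]
      have hswap : ∑ y : Fin m → ZMod p, ∑ c : ZMod p, h (Fin.cons c y)
          = ∑ k ∈ Finset.range p, (p.choose (k+1) : ℤ) *
              ∑ y : Fin m → ZMod p, multiDisc (List.replicate k u₀) h (Fin.cons 0 y) := by
        rw [Finset.sum_congr rfl (fun y _ => hinner y), Finset.sum_comm]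
        apply Finset.sum_congr rfl
        intro k _
        rw [Finset.mul_sum]
      rw [hswap]
      apply Finset.dvd_sum
      intro k hk
      have hkp : k < p := Finset.mem_range.mp hk
      -- the inner function and its W property
      set hkfun : (Fin m → ZMod p) → ℤ :=
        fun y => multiDisc (List.replicate k u₀) h (Fin.cons 0 y) with hkdef
      have hWk : ∀ (t : ℕ) (l : List (Fin m → ZMod p)), e₀ + t*D₀ < (off + k) + l.length →
          ∀ x, (p:ℤ)^(t+1) ∣ multiDisc l hkfun x := by
        intro t l hl x
        have hcomp := multiDisc_comp_pre
          (fun y : Fin m → ZMod p => (Fin.cons 0 y : Fin (m+1) → ZMod p))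
          (fun a : Fin m → ZMod p => (Fin.cons 0 a : Fin (m+1) → ZMod p))
          (by
            intro x' a
            simp [cons_add_cons])
          l (multiDisc (List.replicate k u₀) h)
        have h1 := congrFun hcomp x
        have h2 : multiDisc l hkfun x
            = multiDisc ((l.map (fun a => (Fin.cons 0 a : Fin (m+1) → ZMod p)))
                ++ List.replicate k u₀) h (Fin.cons 0 x) := by
          rw [multiDisc_append]
          exact h1
        rw [h2]
        apply hW t _ _ _
        rw [List.length_append, List.length_map, List.length_replicate]
        omega
      -- divisibility
      rcases Nat.lt_or_ge k (p-1) with hksmall | hkbig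
      · -- binomial coefficient divisible by p
        obtain ⟨B, hB⟩ := Nat.Prime.dvd_choose_self hp.out (Nat.succ_ne_zero k) (by omega)
        have hIH : (p:ℤ)^(γ - 1) ∣ ∑ y : Fin m → ZMod p, hkfun y := by
          apply ih (off + k) (γ - 1) hkfun hWk
          intro L s hs hLs
          have hout := har (k + L) s (le_trans hs (Nat.le_succ m)) (le_trans hLs (Nat.le_add_left L k))
          have heq : off + (k + L) = off + k + L := by omega
          rw [heq] at hout
          generalize hA : (off + k + L - e₀ + D₀ - 1)/D₀ = A at hout ⊢
          omega
        have hcast : (p.choose (k+1) : ℤ) = (p:ℤ) * (B:ℤ) := by exact_mod_cast hB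
        rw [hcast, mul_assoc]
        calc (p:ℤ)^γ ∣ (p:ℤ)^(1 + (γ-1)) := pow_dvd_pow _ (by omega)
        _ = (p:ℤ) * (p:ℤ)^(γ-1) := by rw [pow_add, pow_one]
        _ ∣ (p:ℤ) * ((B:ℤ) * ∑ y : Fin m → ZMod p, hkfun y) := by
            apply mul_dvd_mul_left
            exact Dvd.dvd.mul_left hIH _
      · -- k = p - 1
        have hkeq : k = p - 1 := by omega
        have hIH : (p:ℤ)^γ ∣ ∑ y : Fin m → ZMod p, hkfun y := by
          apply ih (off + k) γ hkfun hWk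
          intro L s hs hLs
          have hout := har (k + L) (s + 1) (Nat.succ_le_succ hs) (by
            have h2 : (p-1)*(s+1) = (p-1)*s + (p-1) := by ring
            omega)
          have h3 : off + (k + L) = off + k + L := by omega
          rw [h3] at hout
          have h4 : m + 1 - (s + 1) = m - s := by omega
          rw [h4] at hout
          set A := (off + k + L - e₀ + D₀ - 1)/D₀ with hA
          omega
        exact Dvd.dvd.mul_left hIH _

end sthree

section final
variable (p : ℕ) [hp : Fact p.Prime]

/-- final arithmetic inequality -/
lemma FA (N n S Dn μ : ℕ) (hp2 : 2 ≤ p) (hDn : 1 ≤ Dn) (hN : 1 ≤ N)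
    (hμ1 : 1 ≤ μ) (hSn : N*S < N*n)
    (hμDn : μ*Dn ≤ N*n - N*S + Dn - 1) (hμle : μ ≤ N*n - N*S) :
    ∀ L s : ℕ, s ≤ n*N → (p-1)*s ≤ L →
      μ ≤ (0 + L - ((p-1)*(N*S)) + ((p-1)*Dn) - 1)/((p-1)*Dn) + (n*N - s) := by
  intro L s hs hLs
  rcases le_or_gt μ (n*N - s) with hcase | hcase
  · exact le_trans hcase (Nat.le_add_left _ _)
  · set j : ℕ := n*N - s with hj
    set t : ℕ := μ - j - 1 with ht
    have hnN : n*N = N*n := Nat.mul_comm n N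
    -- key inequality:  N*S + t*Dn < s
    have hk1 : N*S + t*Dn < s := by
      have hsj : s = n*N - j := by omega
      have h1 : (t : ℤ) = (μ : ℤ) - j - 1 := by
        rw [ht]; omega
      have h2 : (s : ℤ) = (N : ℤ)*n - j := by
        rw [hsj, hnN]; push_cast [Nat.cast_sub (by omega : j ≤ N*n)]; ring
      have h3 : (μ : ℤ)*Dn ≤ (N:ℤ)*n - (N:ℤ)*S + Dn - 1 := by
        have h3' := hμDn
        zify [le_of_lt hSn, (by omega : 1 ≤ N*n - N*S + Dn)] at h3'
        linarith
      have h4 : (1 : ℤ) ≤ (Dn:ℤ) := by exact_mod_cast hDn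
      have h5 : (0:ℤ) ≤ (j : ℤ) := Int.natCast_nonneg j
      zify
      nlinarith [mul_le_mul_of_nonneg_right h5 (by linarith : (0:ℤ) ≤ (Dn:ℤ) - 1)]
    -- multiply by (p-1)
    have hstrong : (p-1)*(N*S) + t*((p-1)*Dn) < L := by
      have h6 : (p-1)*(N*S) + t*((p-1)*Dn) = (p-1)*(N*S + t*Dn) := by ring
      have h7 : (p-1)*(N*S + t*Dn) < (p-1)*s :=
        mul_lt_mul_of_pos_left hk1 (by omega)
      omega
    have hlt : t*((p-1)*Dn) < 0 + L - ((p-1)*(N*S)) := by omega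
    have hD₀pos : 1 ≤ (p-1)*Dn :=
      Nat.one_le_iff_ne_zero.mpr (Nat.mul_ne_zero (by omega) (by omega))
    have hdiv := le_ceil_div_of_lt (0 + L - ((p-1)*(N*S))) ((p-1)*Dn) t hD₀pos hlt
    have h8 : μ ≤ (t+1) + j := by omega
    exact le_trans h8 (Nat.add_le_add_right hdiv j)

/-- the reindexing equivalence -/
def Eequiv (N n : ℕ) : (Fin (n*N) → ZMod p) ≃ (Fin n → Fin N → ZMod p) where
  toFun y := fun j i => y (finProdFinEquiv (j, i))
  invFun h := fun a => h (finProdFinEquiv.symm a).1 (finProdFinEquiv.symm a).2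
  left_inv := by
    intro y; funext a
    have h1 : finProdFinEquiv ((finProdFinEquiv.symm a).1, (finProdFinEquiv.symm a).2) = a := by
      rw [Prod.mk.eta]; exact Equiv.apply_symm_apply _ a
    exact congrArg y h1
  right_inv := by
    intro h; funext j i
    show h (finProdFinEquiv.symm (finProdFinEquiv (j, i))).1
        (finProdFinEquiv.symm (finProdFinEquiv (j, i))).2 = h j i
    rw [Equiv.symm_apply_apply]

lemma Eequiv_add (N n : ℕ) (y z : Fin (n*N) → ZMod p) :
    Eequiv p N n (y + z) = Eequiv p N n y + Eequiv p N n z := rfl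

end final
end AxKatz


open AxKatz

/-- **Group-Theoretic Prime Ax-Katz Theorem.** Let `A = (ℤ/pℤ)^N` and for `1 ≤ j ≤ r` let
`f_j : A^n → A` be a nonzero function of functional degree at most `d_j ≥ 1`. Then
`p ^ max(0, ⌈N (n - ∑_j d_j) / max_j d_j⌉)` divides the number of common zeros. -/
theorem group_theoretic_prime_ax_katz
    (p : ℕ) (hp : p.Prime) (N n r : ℕ) (hN : 1 ≤ N) (hn : 1 ≤ n) (hr : 1 ≤ r)
    (f : Fin r → ((Fin n → (Fin N → ZMod p)) → (Fin N → ZMod p)))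
    (hf0 : ∀ j, f j ≠ 0)
    (d : Fin r → ℕ) (hd : ∀ j, 1 ≤ d j)
    (hfd : ∀ j, FdegLE (f j) (d j)) :
    p ^ (⌈((N : ℚ) * ((n : ℚ) - ∑ j, (d j : ℚ))) /
          (((Finset.univ.sup d) : ℕ) : ℚ)⌉.toNat) ∣
      Nat.card {x : Fin n → (Fin N → ZMod p) // ∀ j, f j x = 0} := by
  classical
  haveI hpf : Fact p.Prime := ⟨hp⟩
  set Dn : ℕ := Finset.univ.sup d with hDnDef
  have hDn1 : 1 ≤ Dn := by
    have h1 := Finset.le_sup (f := d) (Finset.mem_univ (⟨0, hr⟩ : Fin r))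
    exact le_trans (hd _) h1
  have hdDn : ∀ j, d j ≤ Dn := fun j => Finset.le_sup (Finset.mem_univ j)
  set S : ℕ := ∑ j, d j with hSdef
  set X : ℤ := (N:ℤ)*n - (N:ℤ)*S with hXdef
  set μ' : ℤ := ⌈(X:ℚ)/(Dn:ℚ)⌉ with hμ'def
  have hEE : ⌈((N : ℚ) * ((n : ℚ) - ∑ j, (d j : ℚ))) / ((Dn : ℕ) : ℚ)⌉ = μ' := by
    rw [hμ'def]
    congr 1
    rw [hXdef, hSdef]
    push_cast
    ring
  rw [hEE]
  rcases le_or_gt μ' 0 with hneg | hpos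
  · rw [Int.toNat_of_nonpos hneg, pow_zero]
    exact one_dvd _
  set μ : ℕ := μ'.toNat with hμdef
  have hμcast : (μ : ℤ) = μ' := Int.toNat_of_nonneg (le_of_lt hpos)
  have hμ1 : 1 ≤ μ := by omega
  have hDnQ : (0:ℚ) < (Dn:ℚ) := by exact_mod_cast hDn1
  have hceil1 : X ≤ μ' * Dn := by
    have h1 : (X:ℚ)/(Dn:ℚ) ≤ (μ':ℚ) := Int.le_ceil _
    have h2 : (X:ℚ) ≤ (μ':ℚ) * Dn := by
      rw [div_le_iff₀ hDnQ] at h1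
      exact h1
    exact_mod_cast h2
  have hceil2 : μ' * Dn ≤ X + Dn - 1 := by
    have h1 : (μ':ℚ) - 1 < (X:ℚ)/(Dn:ℚ) := by
      have h0 := Int.ceil_lt_add_one ((X:ℚ)/(Dn:ℚ))
      rw [← hμ'def] at h0
      push_cast at h0 ⊢
      linarith
    rw [lt_div_iff₀ hDnQ] at h1
    have h2 : ((μ':ℚ) - 1) * Dn < X := h1
    have h3 : (μ' - 1) * Dn < X := by exact_mod_cast h2
    nlinarith [h3]
  have hDnZ : (1:ℤ) ≤ (Dn:ℤ) := by exact_mod_cast hDn1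
  have hμ'Z : (1:ℤ) ≤ μ' := hpos
  have hXpos : 0 < X := by nlinarith [hceil2]
  have hXposN : N*S < N*n := by
    have h1 : (N:ℤ)*S < (N:ℤ)*n := by rw [hXdef] at hXpos; linarith
    exact_mod_cast h1
  have hμDnN : μ*Dn ≤ N*n - N*S + Dn - 1 := by
    zify [le_of_lt hXposN, (by omega : 1 ≤ N*n - N*S + Dn)]
    rw [hXdef] at hceil2
    push_cast
    rw [← hμcast] at hceil2
    linarith
  have hμleN : μ ≤ N*n - N*S := by
    zify [le_of_lt hXposN]
    have h1 : μ' ≤ X := by nlinarith [hceil2]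
    rw [hXdef] at h1
    rw [← hμcast] at h1
    linarith
  -- component degrees
  have hcomp : ∀ (ji : Fin r × Fin N),
      FdegLE (fun x : Fin n → Fin N → ZMod p => f ji.1 x ji.2) (d ji.1) :=
    fun ji => fdeg_comp_hom (hfd ji.1) (Pi.evalAddMonoidHom (fun _ : Fin N => ZMod p) ji.2)
  have hD₀1 : 1 ≤ (p-1)*Dn :=
    Nat.one_le_iff_ne_zero.mpr (Nat.mul_ne_zero (by have := hp.two_le; omega) (by omega))
  have hW0 : Wcl p (∑ ji : Fin r × Fin N, (p-1)*d ji.1) ((p-1)*Dn)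
      (fun x => ∏ ji : Fin r × Fin N, indic p (fun y => f ji.1 y ji.2) x) := by
    refine Wcl_prod p (ι := Fin r × Fin N) Finset.univ (fun ji => (p-1)*d ji.1)
      (fun ji => indic p (fun y => f ji.1 y ji.2)) ((p-1)*Dn) hD₀1 ?_
    intro ji _
    apply Wcl_mono p (Nat.mul_le_mul_left (p-1) (hdDn ji.1))
    exact key_Wcl p _ (hd ji.1) (hcomp ji)
  set H : (Fin n → Fin N → ZMod p) → ℤ :=
    fun x => ∏ ji : Fin r × Fin N, indic p (fun y => f ji.1 y ji.2) x with hHdef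
  have he₀ : (∑ ji : Fin r × Fin N, (p-1)*d ji.1) = (p-1)*(N*S) := by
    rw [Fintype.sum_prod_type]
    simp only [Finset.sum_const, Finset.card_univ, Fintype.card_fin, smul_eq_mul]
    have h1 : ∀ j : Fin r, N * ((p-1) * d j) = (N*(p-1)) * d j := fun j => by ring
    rw [Finset.sum_congr rfl (fun j _ => h1 j), ← Finset.mul_sum, ← hSdef]
    ring
  rw [he₀] at hW0
  -- transport to Fin (n*N) → ZMod p
  have hWE : ∀ (t : ℕ) (l : List (Fin (n*N) → ZMod p)),
      (p-1)*(N*S) + t*((p-1)*Dn) < 0 + l.length →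
      ∀ x, (p:ℤ)^(t+1) ∣ multiDisc l (fun y => H (Eequiv p N n y)) x := by
    intro t l hl x
    have hcomp2 := multiDisc_comp_pre (fun y => Eequiv p N n y) (fun a => Eequiv p N n a)
      (fun x' a => Eequiv_add p N n x' a) l H
    rw [congrFun hcomp2 x]
    apply hW0 t (l.map (fun a => Eequiv p N n a)) _ (Eequiv p N n x)
    rw [List.length_map]
    omega
  have hsum := S3 p ((p-1)*(N*S)) ((p-1)*Dn) hD₀1 (n*N) 0 μ
    (fun y => H (Eequiv p N n y)) hWE
    (FA p N n S Dn μ hp.two_le hDn1 hN hμ1 hXposN hμDnN hμleN)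
  have hsum2 : ∑ y : Fin (n*N) → ZMod p, H (Eequiv p N n y)
      = ∑ x : Fin n → Fin N → ZMod p, H x :=
    Fintype.sum_equiv (Eequiv p N n) _ _ (fun y => rfl)
  rw [hsum2] at hsum
  -- counting
  have hcount : ((Nat.card {x : Fin n → Fin N → ZMod p // ∀ j, f j x = 0}) : ℤ)
      = ∑ x : Fin n → Fin N → ZMod p, H x := by
    have h1 : ∀ x : Fin n → Fin N → ZMod p, H x = if (∀ j, f j x = 0) then 1 else 0 := by
      intro x
      by_cases hx : ∀ j, f j x = 0
      · rw [if_pos hx, hHdef]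
        apply Finset.prod_eq_one
        intro ji _
        have h2 : f ji.1 x ji.2 = 0 := by rw [hx ji.1]; rfl
        simp [indic, h2]
      · rw [if_neg hx]
        push_neg at hx
        obtain ⟨j, hj⟩ := hx
        obtain ⟨i, hi⟩ := Function.ne_iff.mp hj
        have hi' : f j x i ≠ 0 := by simpa using hi
        rw [hHdef]
        apply Finset.prod_eq_zero (Finset.mem_univ (j, i))
        simp [indic, hi']
    rw [Finset.sum_congr rfl (fun x _ => h1 x), Finset.sum_boole]
    rw [Nat.card_eq_fintype_card, Fintype.card_subtype]
  rw [← hcount] at hsum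
  exact_mod_cast hsum
end
end

section
/- Let N ≥ 1, let B be an abelian group, let f : ℤ^N → B be a function, and let d ∈ ℕ. Then fdeg(f) ≤ d if and only if Δ^n f = 0 for every n ∈ ℕ^N with |n| = d + 1. -/
/-- The multi-index iterated difference operator `Δ^n = Δ_1^{n_1} ⋯ Δ_N^{n_N}` on
functions `ℤ^N → B`, where `Δ_i = Δ_{e_i}` for the `i`-th standard basis vector. -/
def deltaPow {B : Type*} [AddCommGroup B] {N : ℕ} (n : Fin N → ℕ) (f : (Fin N → ℤ) → B) :
    (Fin N → ℤ) → B :=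
  ((List.ofFn fun i => (disc (Pi.single i (1 : ℤ)))^[n i]).foldr (· ∘ ·) id) f

section Basic
variable {A B : Type*} [AddCommGroup A] [AddCommGroup B]

lemma disc_comm (a b : A) (f : A → B) : disc a (disc b f) = disc b (disc a f) := by
  funext x; simp only [disc, add_right_comm]; abel

lemma disc_tau (a b : A) (f : A → B) :
    disc b (fun x => f (x + a)) = fun x => disc b f (x + a) := by
  funext x; simp only [disc, add_right_comm]

lemma disc_zero_fun (a : A) : disc a (0 : A → B) = 0 := by funext x; simp [disc]

lemma disc_add (a : A) (f g : A → B) : disc a (f + g) = disc a f + disc a g := by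
  funext x; simp only [disc, Pi.add_apply]; abel

lemma disc_neg (a : A) (f : A → B) : disc a (-f) = -(disc a f) := by
  funext x; simp only [disc, Pi.neg_apply]; abel

lemma disc_zero_elt (f : A → B) : disc (0:A) f = 0 := by funext x; simp [disc]

lemma disc_add_elt (a b : A) (f : A → B) :
    disc (a + b) f = disc a f + fun x => disc b f (x + a) := by
  funext x; simp only [disc, Pi.add_apply, ← add_assoc]; abel

lemma disc_neg_elt (a : A) (f : A → B) :
    disc (-a) f = -(fun x => disc a f (x + -a)) := by
  funext x; simp [disc]

lemma multiDisc_append (l₁ l₂ : List A) (f : A → B) :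
    multiDisc (l₁ ++ l₂) f = multiDisc l₁ (multiDisc l₂ f) := by
  induction l₁ with
  | nil => rfl
  | cons a l ih =>
      show disc a (multiDisc (l ++ l₂) f) = disc a (multiDisc l (multiDisc l₂ f))
      rw [ih]

lemma multiDisc_replicate (k : ℕ) (a : A) (f : A → B) :
    multiDisc (List.replicate k a) f = (disc a)^[k] f := by
  induction k with
  | zero => rfl
  | succ k ih =>
      rw [List.replicate_succ]
      show disc a _ = _
      rw [ih, Function.iterate_succ_apply']

lemma multiDisc_perm {l l' : List A} (h : l.Perm l') (f : A → B) :
    multiDisc l f = multiDisc l' f := by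
  induction h with
  | nil => rfl
  | cons a _ ih => show disc a _ = disc a _; rw [ih]
  | swap a b l => exact disc_comm _ _ _
  | trans _ _ ih1 ih2 => rw [ih1, ih2]

lemma multiDisc_tau (l : List A) (a : A) (f : A → B) :
    multiDisc l (fun x => f (x + a)) = fun x => multiDisc l f (x + a) := by
  induction l with
  | nil => rfl
  | cons b l ih =>
      show disc b (multiDisc l fun x => f (x + a)) = _
      rw [ih, disc_tau]
      rfl

lemma multiDisc_zero (l : List A) : multiDisc l (0 : A → B) = 0 := by
  induction l with
  | nil => rfl
  | cons a l ih => show disc a _ = _; rw [ih, disc_zero_fun]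

lemma multiDisc_add (l : List A) (f g : A → B) :
    multiDisc l (f + g) = multiDisc l f + multiDisc l g := by
  induction l with
  | nil => rfl
  | cons a l ih => show disc a _ = _; rw [ih, disc_add]; rfl

lemma multiDisc_neg (l : List A) (f : A → B) :
    multiDisc l (-f) = -(multiDisc l f) := by
  induction l with
  | nil => rfl
  | cons a l ih => show disc a _ = _; rw [ih, disc_neg]; rfl

end Basic

section Reach
variable {A B : Type*} [AddCommGroup A] [AddCommGroup B]

inductive Reach (S : Set A) (f : A → B) : ℕ → (A → B) → Prop
  | base : Reach S f 0 f
  | tau (a : A) {k : ℕ} {g : A → B} : Reach S f k g → Reach S f k (fun x => g (x + a))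
  | zero {k : ℕ} : Reach S f k 0
  | add {k : ℕ} {g h : A → B} : Reach S f k g → Reach S f k h → Reach S f k (g + h)
  | neg {k : ℕ} {g : A → B} : Reach S f k g → Reach S f k (-g)
  | step {a : A} (ha : a ∈ S) {k : ℕ} {g : A → B} :
      Reach S f k g → Reach S f (k+1) (disc a g)

lemma reach_disc {S : Set A} {f : A → B} {a : A} (ha : a ∈ AddSubgroup.closure S)
    {k : ℕ} {g : A → B} (hg : Reach S f k g) : Reach S f (k + 1) (disc a g) := by
  let T : AddSubgroup A :=
    { carrier := {a | ∀ (k : ℕ) (g : A → B), Reach S f k g → Reach S f (k+1) (disc a g)}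
      zero_mem' := by
        intro k g _
        rw [disc_zero_elt]
        exact Reach.zero
      add_mem' := by
        intro a b ha hb k g hg
        rw [disc_add_elt]
        exact (ha k g hg).add ((hb k g hg).tau a)
      neg_mem' := by
        intro a ha k g hg
        rw [disc_neg_elt]
        exact ((ha k g hg).tau (-a)).neg }
  have hle : AddSubgroup.closure S ≤ T :=
    (AddSubgroup.closure_le T).mpr (fun s hs => fun k g hg => Reach.step hs hg)
  exact hle ha k g hg

lemma reach_multiDisc {S : Set A} {f : A → B}
    (hS : ∀ x : A, x ∈ AddSubgroup.closure S) (l : List A) :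
    Reach S f l.length (multiDisc l f) := by
  induction l with
  | nil => exact Reach.base
  | cons a l ih => exact reach_disc (hS a) ih

end Reach

def mkList {N : ℕ} (n : Fin N → ℕ) : List (Fin N → ℤ) :=
  (List.ofFn fun i => List.replicate (n i) (Pi.single i (1:ℤ))).flatten

lemma foldr_aux {A B : Type*} [AddCommGroup A] [AddCommGroup B] :
    ∀ (l : List (ℕ × A)) (f : A → B),
      ((l.map fun p => (disc p.2)^[p.1]).foldr (· ∘ ·) id) f
        = multiDisc ((l.map fun p => List.replicate p.1 p.2).flatten) f
  | [], f => rfl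
  | p :: l, f => by
    simp only [List.map_cons, List.foldr_cons, List.flatten_cons]
    rw [multiDisc_append, multiDisc_replicate, ← foldr_aux l f]
    rfl

lemma deltaPow_eq_multiDisc {B : Type*} [AddCommGroup B] {N : ℕ} (n : Fin N → ℕ)
    (f : (Fin N → ℤ) → B) : deltaPow n f = multiDisc (mkList n) f := by
  have h := foldr_aux (List.ofFn fun i => ((n i : ℕ), Pi.single i (1:ℤ))) f
  rw [List.map_ofFn, List.map_ofFn] at h
  exact h

lemma mkList_length {N : ℕ} (n : Fin N → ℕ) : (mkList n).length = ∑ i, n i := by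
  simp [mkList, List.length_flatten, List.map_ofFn, Function.comp_def, List.sum_ofFn]

lemma ofFn_update {α : Type*} {N : ℕ} (G : Fin N → α) (i : Fin N) (v : α) :
    List.ofFn (Function.update G i v) = (List.ofFn G).set i v := by
  apply List.ext_getElem (by simp)
  intro j h1 h2
  simp only [List.getElem_ofFn, List.getElem_set]
  rw [Function.update_apply]
  split_ifs with hij hji hji
  · rfl
  · exact absurd (congrArg Fin.val hij).symm hji
  · exact absurd (Fin.ext hji.symm) hij
  · rfl

lemma flatten_set_perm {α : Type*} (L : List (List α)) (i : ℕ) (hi : i < L.length) (a : α) :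
    ((L.set i (a :: L[i])).flatten).Perm (a :: L.flatten) := by
  have hL : L = L.take i ++ L[i] :: L.drop (i+1) := by
    conv_lhs => rw [← List.take_append_drop i L, List.drop_eq_getElem_cons hi]
  have hset : L.set i (a :: L[i]) = L.take i ++ (a :: L[i]) :: L.drop (i+1) := by
    rw [List.set_eq_take_append_cons_drop, if_pos hi]
  have hR : a :: L.flatten = a :: ((L.take i).flatten ++ (L[i] ++ (L.drop (i+1)).flatten)) := by
    conv_lhs => rw [hL]
    rw [List.flatten_append, List.flatten_cons]
  rw [hset, hR, List.flatten_append, List.flatten_cons, List.cons_append]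
  exact List.perm_middle

lemma mkList_update_perm {N : ℕ} (n : Fin N → ℕ) (i : Fin N) :
    (mkList (Function.update n i (n i + 1))).Perm (Pi.single i (1:ℤ) :: mkList n) := by
  have h1 : (fun j => List.replicate (Function.update n i (n i + 1) j)
        ((Pi.single j (1:ℤ) : Fin N → ℤ)))
      = Function.update (fun j => List.replicate (n j) ((Pi.single j (1:ℤ) : Fin N → ℤ))) i
          ((Pi.single i (1:ℤ) : Fin N → ℤ) :: List.replicate (n i) (Pi.single i (1:ℤ))) := by
    funext j
    rcases eq_or_ne j i with rfl | h
    · simp [List.replicate_succ]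
    · simp [Function.update_of_ne h]
  unfold mkList
  rw [h1, ofFn_update]
  have hi : (i : ℕ) < (List.ofFn fun j => List.replicate (n j) (Pi.single j (1:ℤ))).length := by
    simp [i.isLt]
  have hget : (List.ofFn fun j => List.replicate (n j) (Pi.single j (1:ℤ)))[(i:ℕ)]
      = List.replicate (n i) (Pi.single i (1:ℤ)) := by simp
  rw [← hget]
  exact flatten_set_perm _ _ hi _

lemma sum_update_succ {N : ℕ} (n : Fin N → ℕ) (i : Fin N) :
    (∑ j, Function.update n i (n i + 1) j) = (∑ j, n j) + 1 := by
  rw [Finset.sum_update_of_mem (Finset.mem_univ i)]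
  have := Finset.sum_erase_add Finset.univ n (Finset.mem_univ i)
  rw [← Finset.erase_eq]
  omega

lemma reach_deltaPow {N : ℕ} {B : Type*} [AddCommGroup B] {f g : (Fin N → ℤ) → B} {k : ℕ}
    (h : Reach (Set.range fun i : Fin N => Pi.single i (1:ℤ)) f k g) :
    ∀ m : ℕ, (∀ n : Fin N → ℕ, (∑ i, n i) = m + k → deltaPow n f = 0) →
      ∀ n : Fin N → ℕ, (∑ i, n i) = m → deltaPow n g = 0 := by
  induction h with
  | base => exact fun m H n hn => H n (by simpa using hn)
  | tau a _ ih =>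
      intro m H n hn
      rw [deltaPow_eq_multiDisc, multiDisc_tau]
      have h2 := ih m H n hn
      rw [deltaPow_eq_multiDisc] at h2
      funext x
      simp [h2]
  | zero =>
      intro m H n hn
      rw [deltaPow_eq_multiDisc, multiDisc_zero]
  | add _ _ ih1 ih2 =>
      intro m H n hn
      have h1 := ih1 m H n hn
      have h2 := ih2 m H n hn
      rw [deltaPow_eq_multiDisc] at h1 h2 ⊢
      rw [multiDisc_add, h1, h2, add_zero]
  | neg _ ih =>
      intro m H n hn
      have h1 := ih m H n hn
      rw [deltaPow_eq_multiDisc] at h1 ⊢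
      rw [multiDisc_neg, h1, neg_zero]
  | @step a ha k g hg ih =>
      obtain ⟨i, rfl⟩ := ha
      intro m H n hn
      rw [deltaPow_eq_multiDisc]
      have e1 : multiDisc (mkList n) (disc (Pi.single i (1:ℤ)) g)
          = multiDisc (mkList n ++ [Pi.single i (1:ℤ)]) g := by
        rw [multiDisc_append]; rfl
      rw [e1]
      have hperm : (mkList n ++ [Pi.single i (1:ℤ)]).Perm
          (mkList (Function.update n i (n i + 1))) := by
        refine List.Perm.trans (List.perm_append_singleton _ _) ?_
        exact (mkList_update_perm n i).symm
      rw [multiDisc_perm hperm, ← deltaPow_eq_multiDisc]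
      refine ih (m + 1) (fun n' hn' => H n' (by omega)) _ ?_
      rw [sum_update_succ, hn]

/-- For a function `f : ℤ^N → B`, the functional degree of `f` is at most `d` if and only
if `Δ^n f = 0` for every multi-index `n ∈ ℕ^N` with `|n| = d + 1`. -/
theorem fdegLE_iff_deltaPow_eq_zero
    (N : ℕ) (hN : 1 ≤ N) {B : Type*} [AddCommGroup B]
    (f : (Fin N → ℤ) → B) (d : ℕ) :
    FdegLE f d ↔ ∀ n : Fin N → ℕ, (∑ i, n i) = d + 1 → deltaPow n f = 0 := by
  constructor
  · intro H n hn
    rw [deltaPow_eq_multiDisc]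
    exact H _ (by rw [mkList_length, hn])
  · intro H l hl
    have hcl : ∀ a : Fin N → ℤ,
        a ∈ AddSubgroup.closure (Set.range fun i : Fin N => Pi.single i (1:ℤ)) := by
      intro a
      rw [← Finset.univ_sum_single a]
      refine AddSubgroup.sum_mem _ (fun i _ => ?_)
      have h1 : (Pi.single i (a i) : Fin N → ℤ) = a i • (Pi.single i (1:ℤ) : Fin N → ℤ) := by
        rw [← Pi.single_smul, smul_eq_mul, mul_one]
      rw [h1]
      exact AddSubgroup.zsmul_mem _ (AddSubgroup.subset_closure (Set.mem_range_self i)) _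
    have hr := reach_multiDisc (f := f) hcl l
    rw [hl] at hr
    have h0 := reach_deltaPow hr 0 (fun n hn => H n (by simpa using hn)) 0 (by simp)
    have hz : mkList (0 : Fin N → ℕ) = [] := by
      apply List.eq_nil_of_length_eq_zero
      simp [mkList_length]
    rw [deltaPow_eq_multiDisc, hz] at h0
    exact h0
end

section
/- Let A_1, …, A_N and B be abelian groups, let A := A_1 × ⋯ × A_N, and let f : A → B. For 1 ≤ j ≤ N say fdeg_j(f) ≤ d (d ∈ ℕ) if Δ_{a_1}⋯Δ_{a_{d+1}} f = 0 for all a_1, …, a_{d+1} lying in the j-th factor A_j (embedded in A with zeros in the other coordinates). Then: (i) for every d ∈ ℕ and every 1 ≤ j ≤ N, if fdeg(f) ≤ d then fdeg_j(f) ≤ d; and (ii) if d_1, …, d_N ∈ ℕ satisfy fdeg_j(f) ≤ d_j for every 1 ≤ j ≤ N, then fdeg(f) ≤ d_1 + ⋯ + d_N. -/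
/-- `FdegJLE A j f d` says the `j`-th partial functional degree of
`f : A_1 × ⋯ × A_N → B` is at most `d`: all `(d+1)`-fold iterated differences of `f`
with increments from the `j`-th factor (embedded with zeros elsewhere) vanish. -/
def FdegJLE {N : ℕ} (A : Fin N → Type*) [∀ i, AddCommGroup (A i)]
    {B : Type*} [AddCommGroup B] (j : Fin N) (f : (∀ i, A i) → B) (d : ℕ) : Prop :=
  ∀ l : List (A j), l.length = d + 1 →
    multiDisc (l.map fun a => Pi.single j a) f = 0

section Aux

variable {A B : Type*} [AddCommGroup A] [AddCommGroup B]

lemma multiDisc_disc (l : List A) (a : A) (g : A → B) :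
    multiDisc l (disc a g) = disc a (multiDisc l g) := by
  induction l with
  | nil => rfl
  | cons b l ih => simp [multiDisc, ih, disc_comm]

lemma multiDisc_comm (l l' : List A) (g : A → B) :
    multiDisc l (multiDisc l' g) = multiDisc l' (multiDisc l g) := by
  induction l with
  | nil => rfl
  | cons a l ih => simp only [multiDisc, ih, multiDisc_disc]

lemma multiDisc_middle (x y : List A) (a : A) (f : A → B) :
    multiDisc (x ++ a :: y) f = disc a (multiDisc (x ++ y) f) := by
  rw [multiDisc_append, multiDisc_append]
  exact multiDisc_disc x a (multiDisc y f)

lemma disc_add_eq (u v : A) (f : A → B) :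
    disc (u + v) f = disc u f + disc v f + disc u (disc v f) := by
  funext x
  simp only [disc, Pi.add_apply]
  rw [show x + (u + v) = x + v + u by abel]
  abel

/-- `f` has partial degree at most `d` with respect to increments from `s`. -/
def SDeg (s : Set A) (f : A → B) (d : ℕ) : Prop :=
  ∀ l : List A, (∀ a ∈ l, a ∈ s) → l.length = d + 1 → multiDisc l f = 0

lemma SDeg.vanish {s : Set A} {f : A → B} {d : ℕ} (hs : SDeg s f d)
    (l : List A) (hmem : ∀ a ∈ l, a ∈ s) (hlen : d + 1 ≤ l.length) :
    multiDisc l f = 0 := by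
  have h1 : multiDisc (l.take (d+1)) f = 0 :=
    hs _ (fun a ha => hmem a (List.take_subset _ _ ha)) (by rw [List.length_take]; omega)
  calc multiDisc l f = multiDisc (l.take (d+1) ++ l.drop (d+1)) f := by
        rw [List.take_append_drop]
    _ = multiDisc (l.drop (d+1)) (multiDisc (l.take (d+1)) f) := by
        rw [multiDisc_append, multiDisc_comm]
    _ = 0 := by rw [h1, multiDisc_zero]

lemma SDeg.anti {s s' : Set A} {f : A → B} {d : ℕ} (hsub : s' ⊆ s) (hs : SDeg s f d) :
    SDeg s' f d :=
  fun l hl => hs l (fun a ha => hsub (hl a ha))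

lemma key {s t : Set A} {f : A → B} {d₁ d₂ : ℕ} (hs : SDeg s f d₁) (ht : SDeg t f d₂) :
    ∀ (l : List A), (∀ a ∈ l, ∃ u ∈ s, ∃ v ∈ t, a = u + v) →
    ∀ (l₁ l₂ : List A), (∀ a ∈ l₁, a ∈ s) → (∀ a ∈ l₂, a ∈ t) →
    d₁ + d₂ + 1 ≤ l.length + l₁.length + l₂.length →
    multiDisc (l₁ ++ l₂ ++ l) f = 0 := by
  intro l
  induction l with
  | nil =>
    intro _ l₁ l₂ h₁ h₂ hlen
    simp only [List.length_nil] at hlen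
    rcases le_or_gt (d₁+1) l₁.length with h | h
    · have h0 : multiDisc l₁ f = 0 := hs.vanish l₁ h₁ h
      rw [List.append_nil, multiDisc_append, multiDisc_comm, h0, multiDisc_zero]
    · have hlt : d₂ + 1 ≤ l₂.length := by omega
      have h0 : multiDisc l₂ f = 0 := ht.vanish l₂ h₂ hlt
      rw [List.append_nil, multiDisc_append, h0, multiDisc_zero]
  | cons a l ih =>
    intro hmem l₁ l₂ h₁ h₂ hlen
    obtain ⟨u, hu, v, hv, ha⟩ := hmem a List.mem_cons_self
    subst ha
    have hm : ∀ x ∈ l, ∃ u ∈ s, ∃ v ∈ t, x = u + v :=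
      fun x hx => hmem x (List.mem_cons_of_mem _ hx)
    simp only [List.length_cons] at hlen
    have h₁' : ∀ b ∈ u :: l₁, b ∈ s := by
      intro b hb
      rcases List.mem_cons.mp hb with hb | hb
      · subst hb; exact hu
      · exact h₁ b hb
    have h₂' : ∀ b ∈ v :: l₂, b ∈ t := by
      intro b hb
      rcases List.mem_cons.mp hb with hb | hb
      · subst hb; exact hv
      · exact h₂ b hb
    have e₂ : multiDisc (l₁ ++ (v :: l₂) ++ l) f
        = disc v (multiDisc (l₁ ++ l₂ ++ l) f) := by
      simp only [List.append_assoc, List.cons_append, multiDisc_middle]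
    have z₁ : disc u (multiDisc (l₁ ++ l₂ ++ l) f) = 0 :=
      ih hm (u :: l₁) l₂ h₁' h₂ (by simp only [List.length_cons]; omega)
    have z₂ : disc v (multiDisc (l₁ ++ l₂ ++ l) f) = 0 := by
      rw [← e₂]
      exact ih hm l₁ (v :: l₂) h₁ h₂' (by simp only [List.length_cons]; omega)
    have z₃ : disc u (disc v (multiDisc (l₁ ++ l₂ ++ l) f)) = 0 := by
      rw [← e₂]
      exact ih hm (u :: l₁) (v :: l₂) h₁' h₂' (by simp only [List.length_cons]; omega)
    have hG : multiDisc (l₁ ++ l₂ ++ ((u + v) :: l)) f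
        = disc (u + v) (multiDisc (l₁ ++ l₂ ++ l) f) := multiDisc_middle (l₁ ++ l₂) l _ f
    rw [hG, disc_add_eq, z₃, z₁, z₂]
    simp

lemma SDeg.add {s t : Set A} {f : A → B} {d₁ d₂ : ℕ} (hs : SDeg s f d₁) (ht : SDeg t f d₂) :
    SDeg {c | ∃ u ∈ s, ∃ v ∈ t, c = u + v} f (d₁ + d₂) := by
  intro l hl hlen
  have := key hs ht l hl [] [] (by simp) (by simp) (by simp [hlen])
  simpa using this

lemma exists_map_of_mem_range {α β : Type*} (g : α → β) :
    ∀ l : List β, (∀ a ∈ l, a ∈ Set.range g) → ∃ l' : List α, l = l'.map g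
  | [], _ => ⟨[], rfl⟩
  | a :: l, h => by
    obtain ⟨b, hb⟩ := h a (by simp)
    obtain ⟨l', hl'⟩ := exists_map_of_mem_range g l (fun x hx => h x (by simp [hx]))
    exact ⟨b :: l', by simp [hl', hb]⟩

end Aux

/-- **Partial functional degrees.** For `f : A_1 × ⋯ × A_N → B`:
(i) `fdeg_j(f) ≤ fdeg(f)` for each `j`, and
(ii) if `fdeg_j(f) ≤ d_j` for all `j` then `fdeg(f) ≤ d_1 + ⋯ + d_N`. -/
theorem partial_functional_degree
    (N : ℕ) (hN : 1 ≤ N) (A : Fin N → Type*) [∀ i, AddCommGroup (A i)]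
    {B : Type*} [AddCommGroup B] (f : (∀ i, A i) → B) :
    (∀ (d : ℕ) (j : Fin N), FdegLE f d → FdegJLE A j f d) ∧
    (∀ d : Fin N → ℕ, (∀ j : Fin N, FdegJLE A j f (d j)) → FdegLE f (∑ j, d j)) := by
  classical
  constructor
  · intro d j h l hlen
    exact h _ (by simpa using hlen)
  · intro d hd
    have hfac : ∀ j : Fin N,
        SDeg (Set.range (fun b : A j => (Pi.single j b : ∀ i, A i))) f (d j) := by
      intro j l hl hlen
      obtain ⟨l', rfl⟩ := exists_map_of_mem_range _ l hl
      exact hd j l' (by simpa using hlen)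
    have main : ∀ T : Finset (Fin N),
        SDeg {a : ∀ i, A i | ∀ i ∉ T, a i = 0} f (∑ j ∈ T, d j) := by
      intro T
      induction T using Finset.induction_on with
      | empty =>
        intro l hl hlen
        rw [Finset.sum_empty] at hlen
        have hl1 : l.length = 1 := by omega
        obtain ⟨a, rfl⟩ := List.length_eq_one_iff.mp hl1
        have ha : a = 0 := by
          funext i
          exact hl a (by simp) i (by simp)
        subst ha
        show disc 0 (multiDisc [] f) = 0
        funext x
        simp [disc, multiDisc]
      | @insert j T hj ih =>
        have hsub : {a : ∀ i, A i | ∀ i ∉ insert j T, a i = 0} ⊆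
            {c | ∃ u ∈ {a : ∀ i, A i | ∀ i ∉ T, a i = 0},
              ∃ v ∈ Set.range (fun b : A j => (Pi.single j b : ∀ i, A i)), c = u + v} := by
          intro a ha
          refine ⟨Function.update a j 0, ?_, Pi.single j (a j), ⟨a j, rfl⟩, ?_⟩
          · intro i hi
            by_cases hij : i = j
            · subst hij; simp
            · rw [Function.update_of_ne hij]
              exact ha i (by simp [hij, hi])
          · funext i
            by_cases hij : i = j
            · subst hij; simp
            · simp [Function.update_of_ne hij, Pi.single_eq_of_ne hij]
        have hthis := SDeg.anti hsub (SDeg.add ih (hfac j))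
        rw [Finset.sum_insert hj]
        rwa [Nat.add_comm] at hthis
    have huniv := main Finset.univ
    intro l hlen
    exact huniv l (fun a _ i hi => absurd (Finset.mem_univ i) hi) hlen
end

section
/- Let N ≥ 1, let B be an abelian group, let f : ℤ^N → B, and let d ∈ ℕ be such that fdeg(f) ≤ d. Then for every x = (x_1, …, x_N) ∈ ℤ^N one has f(x) = Σ_{n ∈ ℕ^N, |n| ≤ d} (C(x_1, n_1)⋯C(x_N, n_N)) • Δ^n f(0). -/
/-! ### Auxiliary material -/

section Shift

variable {A B : Type*} [AddCommGroup A] [AddCommGroup B]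

/-- The shift operator. -/
def shiftF (a : A) (f : A → B) : A → B := fun x => f (x + a)

lemma shiftF_zero (f : A → B) : shiftF 0 f = f := by
  funext x; simp [shiftF]

lemma shiftF_shiftF (a b : A) (f : A → B) : shiftF a (shiftF b f) = shiftF (b + a) f := by
  funext x; simp [shiftF, add_assoc, add_comm b a]

lemma shiftF_zero_fun (a : A) : shiftF a (0 : A → B) = 0 := rfl

lemma shiftF_injective (a : A) : Function.Injective (shiftF a : (A → B) → (A → B)) := by
  intro g h e
  have := congrArg (shiftF (-a)) e
  simpa [shiftF_shiftF, shiftF_zero] using this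

lemma disc_shiftF (a b : A) (f : A → B) : disc b (shiftF a f) = shiftF a (disc b f) := by
  funext x; simp [disc, shiftF, add_right_comm]

lemma multiDisc_perm_s8 {l₁ l₂ : List A} (p : l₁.Perm l₂) (f : A → B) :
    multiDisc l₁ f = multiDisc l₂ f := by
  induction p with
  | nil => rfl
  | cons a _ ih => show disc a _ = disc a _; rw [ih]
  | swap a b l => show disc b (disc a _) = disc a (disc b _); rw [disc_comm]
  | trans _ _ ih₁ ih₂ => rw [ih₁, ih₂]

lemma multiDisc_shiftF (l : List A) (v : A) (f : A → B) :
    multiDisc l (shiftF v f) = shiftF v (multiDisc l f) := by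
  induction l with
  | nil => rfl
  | cons a l ih =>
    show disc a (multiDisc l (shiftF v f)) = _
    rw [ih, disc_shiftF]
    rfl

lemma multiDisc_eq_zero_of_length {f : A → B} {d : ℕ} (h : FdegLE f d) {l : List A}
    (hl : d + 1 ≤ l.length) : multiDisc l f = 0 := by
  have h2 : l = List.take (l.length - (d + 1)) l ++ List.drop (l.length - (d + 1)) l :=
    (List.take_append_drop _ _).symm
  rw [h2, multiDisc_append, h _ (by rw [List.length_drop]; omega), multiDisc_zero]

end Shift

section Newton

variable {A B : Type*} [AddCommGroup A] [AddCommGroup B]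

lemma pascal_sum {M : Type*} [AddCommGroup M] (x : ℤ) (d : ℕ) (g : ℕ → M) (hg : g (d + 1) = 0) :
    ∑ n ∈ Finset.range (d + 1), Ring.choose (x + 1) n • g n
      = ∑ n ∈ Finset.range (d + 1), Ring.choose x n • g n
        + ∑ n ∈ Finset.range (d + 1), Ring.choose x n • g (n + 1) := by
  have e2 : ∑ n ∈ Finset.range (d + 1), Ring.choose x n • g n
      = ∑ n ∈ Finset.range (d + 1), Ring.choose x (n + 1) • g (n + 1) + g 0 := by
    calc ∑ n ∈ Finset.range (d + 1), Ring.choose x n • g n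
        = ∑ n ∈ Finset.range (d + 1 + 1), Ring.choose x n • g n := by
          rw [Finset.sum_range_succ (fun n => Ring.choose x n • g n) (d + 1), hg, smul_zero,
            add_zero]
      _ = ∑ n ∈ Finset.range (d + 1), Ring.choose x (n + 1) • g (n + 1)
            + Ring.choose x 0 • g 0 := Finset.sum_range_succ' _ _
      _ = _ := by rw [Ring.choose_zero_right, one_smul]
  have e1 : ∑ n ∈ Finset.range (d + 1), Ring.choose (x + 1) n • g n
      = ∑ n ∈ Finset.range (d + 1 + 1), Ring.choose (x + 1) n • g n := by
    rw [Finset.sum_range_succ (fun n => Ring.choose (x + 1) n • g n) (d + 1), hg, smul_zero,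
      add_zero]
  rw [e1, Finset.sum_range_succ' (fun n => Ring.choose (x + 1) n • g n) (d + 1)]
  simp only [Ring.choose_succ_succ, add_smul, Ring.choose_zero_right, one_smul]
  rw [Finset.sum_add_distrib, e2]
  abel

lemma newton_one (a : A) (f : A → B) (d : ℕ) (h : (disc a)^[d + 1] f = 0) (x : ℤ) :
    shiftF (x • a) f = ∑ n ∈ Finset.range (d + 1), Ring.choose x n • (disc a)^[n] f := by
  have key : ∀ y : ℤ,
      shiftF a (∑ n ∈ Finset.range (d + 1), Ring.choose y n • (disc a)^[n] f)
        = ∑ n ∈ Finset.range (d + 1), Ring.choose (y + 1) n • (disc a)^[n] f := by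
    intro y
    have h1 : shiftF a (∑ n ∈ Finset.range (d + 1), Ring.choose y n • (disc a)^[n] f)
        = ∑ n ∈ Finset.range (d + 1),
            (Ring.choose y n • (disc a)^[n] f + Ring.choose y n • (disc a)^[n + 1] f) := by
      funext z
      simp only [shiftF, Finset.sum_apply, Pi.add_apply, Pi.smul_apply]
      refine Finset.sum_congr rfl fun n _ => ?_
      rw [Function.iterate_succ_apply']
      simp only [disc]
      rw [smul_sub]
      abel
    rw [h1, Finset.sum_add_distrib]
    exact (pascal_sum y d (fun n => (disc a)^[n] f) h).symm
  induction x using Int.induction_on with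
  | zero =>
    rw [zero_smul, shiftF_zero]
    symm
    rw [Finset.sum_eq_single_of_mem 0 (Finset.mem_range.mpr d.succ_pos)
      (fun n _ hn => by rw [Ring.choose_zero_pos ℤ (Nat.pos_of_ne_zero hn), zero_smul])]
    simp
  | succ i ih =>
    have e : ((i : ℤ) + 1) • a = (i : ℤ) • a + a := by rw [add_smul, one_smul]
    rw [e, ← shiftF_shiftF, ih, key]
  | pred i ih =>
    apply shiftF_injective a
    rw [shiftF_shiftF, key]
    have e2 : (-(i : ℤ) - 1) • a + a = (-(i : ℤ)) • a := by
      rw [sub_smul, one_smul, sub_add_cancel]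
    have e3 : (-(i : ℤ) - 1) + 1 = -(i : ℤ) := by ring
    rw [e2, e3, ih]

end Newton

section Multivar

variable {B : Type*} [AddCommGroup B] {N : ℕ}

/-- The canonical list of basis vectors associated to a multi-index. -/
def Jlist (n : Fin N → ℕ) : List (Fin N → ℤ) :=
  (List.ofFn fun i => List.replicate (n i) (Pi.single i (1 : ℤ))).flatten

lemma foldr_flatten {A : Type*} [AddCommGroup A] (L : List (List A)) (f : A → B) :
    multiDisc L.flatten f
      = (L.map fun l => (multiDisc l : (A → B) → (A → B))).foldr (· ∘ ·) id f := by
  induction L with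
  | nil => rfl
  | cons l L ih => simp [List.flatten_cons, multiDisc_append, ih]

lemma deltaPow_eq (n : Fin N → ℕ) (f : (Fin N → ℤ) → B) :
    deltaPow n f = multiDisc (Jlist n) f := by
  have h : (fun i : Fin N =>
        (disc (Pi.single i (1 : ℤ)) : ((Fin N → ℤ) → B) → ((Fin N → ℤ) → B))^[n i])
      = fun i : Fin N => (fun g : (Fin N → ℤ) → B =>
          multiDisc (List.replicate (n i) (Pi.single i (1 : ℤ))) g) := by
    funext i g
    rw [multiDisc_replicate]
  rw [deltaPow, h, Jlist, foldr_flatten, List.map_ofFn]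
  rfl

lemma count_Jlist (v : Fin N → ℤ) (n : Fin N → ℕ) :
    List.count v (Jlist n) = ∑ i : Fin N, if Pi.single i (1 : ℤ) = v then n i else 0 := by
  rw [Jlist, List.count_flatten, List.map_ofFn, List.sum_ofFn]
  refine Finset.sum_congr rfl fun i _ => ?_
  simp [List.count_replicate]

lemma Jlist_perm (n : Fin N → ℕ) (i : Fin N) (k : ℕ) :
    (Jlist (n + Pi.single i k)).Perm (List.replicate k (Pi.single i (1 : ℤ)) ++ Jlist n) := by
  classical
  rw [List.perm_iff_count]
  intro v
  rw [List.count_append, count_Jlist, count_Jlist, List.count_replicate]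
  have : ∀ j : Fin N,
      (if Pi.single j (1 : ℤ) = v then (n + Pi.single i k : Fin N → ℕ) j else 0)
        = (if Pi.single j (1 : ℤ) = v then n j else 0)
          + (if j = i then (if Pi.single i (1 : ℤ) = v then k else 0) else 0) := by
    intro j
    by_cases h1 : j = i
    · subst h1
      by_cases h2 : Pi.single j (1 : ℤ) = v <;> simp [h2, Pi.single_eq_same]
    · by_cases h2 : Pi.single j (1 : ℤ) = v <;>
        simp [h1, h2, Pi.single_eq_of_ne h1]
  rw [Finset.sum_congr rfl fun j _ => this j, Finset.sum_add_distrib,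
    Finset.sum_ite_eq' Finset.univ i
      (fun _ => if Pi.single i (1 : ℤ) = v then k else 0)]
  simp only [Finset.mem_univ, if_true, beq_iff_eq]
  rw [add_comm]

lemma length_Jlist (n : Fin N → ℕ) : (Jlist n).length = ∑ i, n i := by
  simp [Jlist, List.length_flatten, List.map_ofFn, List.sum_ofFn, Function.comp]

lemma deltaPow_zero (f : (Fin N → ℤ) → B) : deltaPow 0 f = f := by
  rw [deltaPow_eq]
  have : Jlist (0 : Fin N → ℕ) = [] := by
    refine List.length_eq_zero_iff.mp ?_
    rw [length_Jlist]
    simp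
  rw [this]
  rfl

lemma iterate_disc_deltaPow (i : Fin N) (k : ℕ) (n : Fin N → ℕ) (f : (Fin N → ℤ) → B) :
    (disc (Pi.single i (1 : ℤ)))^[k] (deltaPow n f) = deltaPow (n + Pi.single i k) f := by
  rw [deltaPow_eq, deltaPow_eq, multiDisc_perm_s8 (Jlist_perm n i k), multiDisc_append,
    multiDisc_replicate]

lemma deltaPow_shiftF (n : Fin N → ℕ) (v : Fin N → ℤ) (f : (Fin N → ℤ) → B) :
    deltaPow n (shiftF v f) = shiftF v (deltaPow n f) := by
  rw [deltaPow_eq, deltaPow_eq, multiDisc_shiftF]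

lemma deltaPow_eq_zero {f : (Fin N → ℤ) → B} {d : ℕ} (h : FdegLE f d) {n : Fin N → ℕ}
    (hn : d < ∑ i, n i) : deltaPow n f = 0 := by
  rw [deltaPow_eq]
  exact multiDisc_eq_zero_of_length h (by rw [length_Jlist]; omega)

lemma newton_single (a : Fin N) (g : (Fin N → ℤ) → B) (d : ℕ)
    (h : (disc (Pi.single a (1 : ℤ)))^[d + 1] g = 0) (t : ℤ) :
    shiftF (Pi.single a t) g
      = ∑ k ∈ Finset.range (d + 1), Ring.choose t k • (disc (Pi.single a (1 : ℤ)))^[k] g := by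
  have e : (Pi.single a t : Fin N → ℤ) = t • Pi.single a (1 : ℤ) := by
    funext j; by_cases hj : j = a <;> simp [hj, Pi.single_apply]
  rw [e]
  exact newton_one _ _ d h t

lemma box (d : ℕ) (x : Fin N → ℤ) (s : Finset (Fin N)) :
    ∀ f : (Fin N → ℤ) → B, FdegLE f d →
      shiftF (fun i => if i ∈ s then x i else 0) f
        = ∑ n ∈ Finset.Iic fun i => if i ∈ s then d else 0,
            (∏ i ∈ s, Ring.choose (x i) (n i)) • deltaPow n f := by
  classical
  induction s using Finset.induction_on with
  | empty =>
    intro f hf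
    have h0 : (fun i : Fin N => if i ∈ (∅ : Finset (Fin N)) then x i else 0) = 0 := by
      funext i; simp
    have h1 : (fun i : Fin N => if i ∈ (∅ : Finset (Fin N)) then d else 0)
        = (0 : Fin N → ℕ) := by funext i; simp
    rw [h0, shiftF_zero, h1]
    have hmem : (0 : Fin N → ℕ) ∈ Finset.Iic (0 : Fin N → ℕ) := Finset.mem_Iic.mpr le_rfl
    rw [Finset.sum_eq_single_of_mem (0 : Fin N → ℕ) hmem fun n hn hne => by
      exact absurd (funext fun i => Nat.le_zero.mp ((Finset.mem_Iic.mp hn) i) : n = 0) hne]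
    simp [deltaPow_zero]
  | @insert a s ha ih =>
    intro f hf
    have hw : (fun i : Fin N => if i ∈ insert a s then x i else 0)
        = Pi.single a (x a) + fun i => if i ∈ s then x i else 0 := by
      funext j
      by_cases hj : j = a
      · subst hj; simp [ha, Pi.single_eq_same]
      · simp [hj, Pi.single_eq_of_ne hj, Finset.mem_insert]
    rw [hw, ← shiftF_shiftF]
    set f' := shiftF (Pi.single a (x a)) f with hff'
    have hdeg' : FdegLE f' d := fun l hl => by
      rw [hff', multiDisc_shiftF, hf l hl, shiftF_zero_fun]
    rw [ih f' hdeg']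
    have hvan : ∀ n : Fin N → ℕ,
        (disc (Pi.single a (1 : ℤ)))^[d + 1] (deltaPow n f) = 0 := by
      intro n
      rw [iterate_disc_deltaPow]
      apply deltaPow_eq_zero hf
      have hs : ∑ i : Fin N, (n + Pi.single a (d + 1) : Fin N → ℕ) i
          = (∑ i : Fin N, n i) + (d + 1) := by
        simp only [Pi.add_apply]
        rw [Finset.sum_add_distrib, Finset.sum_pi_single' a (d + 1) Finset.univ]
        simp
      omega
    have hstep : ∀ n ∈ Finset.Iic fun i => if i ∈ s then d else 0,
        (∏ i ∈ s, Ring.choose (x i) (n i)) • deltaPow n f'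
          = ∑ k ∈ Finset.range (d + 1), (∏ i ∈ s, Ring.choose (x i) (n i)) •
              (Ring.choose (x a) k • deltaPow (n + Pi.single a k) f) := by
      intro n _
      rw [hff', deltaPow_shiftF, newton_single a (deltaPow n f) d (hvan n) (x a),
        Finset.smul_sum]
      refine Finset.sum_congr rfl fun k _ => ?_
      rw [iterate_disc_deltaPow]
    rw [Finset.sum_congr rfl hstep, ← Finset.sum_product']
    refine Finset.sum_nbij' (fun p => p.1 + Pi.single a p.2)
      (fun m => (Function.update m a 0, m a)) ?_ ?_ ?_ ?_ ?_
    · rintro ⟨n, k⟩ hp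
      dsimp only
      rw [Finset.mem_product] at hp
      obtain ⟨hn, hk⟩ := hp
      rw [Finset.mem_Iic, Pi.le_def] at hn
      rw [Finset.mem_range] at hk
      rw [Finset.mem_Iic, Pi.le_def]
      intro i
      have hni := hn i
      by_cases hia : i = a
      · subst hia
        simp only [ha, if_false, Nat.le_zero] at hni
        simp [Pi.single_eq_same, hni]
        omega
      · simp only [Pi.add_apply, Pi.single_eq_of_ne hia, add_zero, Finset.mem_insert, hia,
          false_or]
        exact hni
    · intro m hm
      rw [Finset.mem_Iic, Pi.le_def] at hm
      have h1 : Function.update m a 0 ∈ Finset.Iic fun i => if i ∈ s then d else 0 := by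
        rw [Finset.mem_Iic, Pi.le_def]
        intro i
        by_cases hia : i = a
        · subst hia; simp [Function.update_self]
        · rw [Function.update_of_ne hia]
          have h2 := hm i
          rwa [show (if i ∈ insert a s then d else 0) = if i ∈ s then d else 0 by
            simp [Finset.mem_insert, hia]] at h2
      have h3 : m a ∈ Finset.range (d + 1) := by
        rw [Finset.mem_range]
        have h4 : m a ≤ d := by simpa using hm a
        omega
      exact Finset.mem_product.mpr ⟨h1, h3⟩
    · rintro ⟨n, k⟩ hp
      dsimp only
      rw [Finset.mem_product, Finset.mem_Iic, Pi.le_def] at hp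
      have hna : n a = 0 := by
        have := hp.1 a
        simpa [ha] using this
      rw [Prod.mk.injEq]
      constructor
      · funext i
        by_cases hia : i = a
        · subst hia; rw [Function.update_self, hna]
        · rw [Function.update_of_ne hia]
          simp [Pi.single_eq_of_ne hia]
      · simp [Pi.single_eq_same, hna]
    · intro m _
      dsimp only
      funext i
      by_cases hia : i = a
      · subst hia; simp [Function.update_self, Pi.single_eq_same]
      · simp [Function.update_of_ne hia, Pi.single_eq_of_ne hia]
    · rintro ⟨n, k⟩ hp
      dsimp only
      rw [Finset.mem_product, Finset.mem_Iic, Pi.le_def] at hp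
      have hna : n a = 0 := by
        have := hp.1 a
        simpa [ha] using this
      rw [Finset.prod_insert ha]
      have e4 : (n + Pi.single a k : Fin N → ℕ) a = k := by simp [Pi.single_eq_same, hna]
      have e5 : ∀ i ∈ s, (n + Pi.single a k : Fin N → ℕ) i = n i := fun i hi => by
        have hia : i ≠ a := fun h => ha (h ▸ hi)
        simp [Pi.single_eq_of_ne hia]
      have e6 : ∏ i ∈ s, Ring.choose (x i) ((n + Pi.single a k : Fin N → ℕ) i)
          = ∏ i ∈ s, Ring.choose (x i) (n i) :=
        Finset.prod_congr rfl fun i hi => by rw [e5 i hi]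
      rw [e4, e6, smul_smul, mul_comm]

end Multivar

/-- **The fundamental representation (Theorem 2.8b).** If `f : ℤ^N → B` has functional
degree at most `d`, then for every `x ∈ ℤ^N` one has
`f x = ∑_{|n| ≤ d} (C(x_1,n_1)⋯C(x_N,n_N)) • Δ^n f(0)`, where `C(x, n) = Ring.choose x n`
is the integer-valued binomial coefficient. -/
theorem fundamental_representation_of_fdegLE
    (N : ℕ) (hN : 1 ≤ N) {B : Type*} [AddCommGroup B] (f : (Fin N → ℤ) → B)
    (d : ℕ) (hdeg : FdegLE f d) :
    ∀ x : Fin N → ℤ,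
      f x = ∑ n ∈ (Finset.Iic fun _ : Fin N => d).filter (fun n => ∑ i, n i ≤ d),
        (∏ i, Ring.choose (x i) (n i)) • deltaPow n f 0 := by
  intro x
  have hbox := box d x Finset.univ f hdeg
  have hx : (fun i : Fin N => if i ∈ (Finset.univ : Finset (Fin N)) then x i else 0) = x := by
    funext i; simp
  have hchi : (fun i : Fin N => if i ∈ (Finset.univ : Finset (Fin N)) then d else 0)
      = fun _ : Fin N => d := by funext i; simp
  rw [hx, hchi] at hbox
  have hfx : f x = shiftF x f 0 := by simp [shiftF]
  rw [hfx, hbox, Finset.sum_apply]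
  simp only [Pi.smul_apply]
  refine (Finset.sum_filter_of_ne ?_).symm
  intro n hn hne
  by_contra hc
  apply hne
  rw [deltaPow_eq_zero hdeg (Nat.lt_of_not_le hc)]
  simp
end
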